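/- arXiv:2112.00518 — 3 statements merged into one kernel-verified Lean document; each statement's English description precedes it below -/
import Mathlib

section
/- For every positive integer a, the rank sequence of the circular fence poset F̄((1,a,1,a)) is (1,2,…,a, a+1, a, a+1, a, a−1,…,2,1); that is, r̄_k = k+1 for 0 ≤ k ≤ a, r̄_{a+1} = a, and r̄_k = r̄_{2a+2−k} for k > a+1. In particular this rank sequence is not unimodal. -/
attribute [local instance] Classical.propDecidable

noncomputable section

/-- `α` is a composition: a nonempty list of positive integers. -/
def IsComposition (α : List ℕ) : Prop := α ≠ [] ∧ ∀ p ∈ α, 0 < p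

/-- The 0-based index of the segment of the composition `α` containing edge `e`,
where edge `e` joins nodes `e` and `e+1` (nodes are 0-indexed, so node `i`
is the element `x_{i+1}` of the fence). -/
def segIdx (α : List ℕ) (e : ℕ) : ℕ :=
  ((List.range α.length).filter fun j => decide ((α.take (j + 1)).sum ≤ e)).length

/-- Edge `e` of the fence of `α` points upwards (node `e` ⪯ node `e+1`):
edges in odd (1-based) segments point up, edges in even segments point down. -/
def upEdge (α : List ℕ) (e : ℕ) : Prop := Even (segIdx α e)

/-- The defining relations of the fence poset `F(α)` on `Fin (α.sum + 1)`:
`fenceStep α x y` holds iff `x ⪯ y` is one of the generating (cover) relations. -/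
def fenceStep (α : List ℕ) (x y : Fin (α.sum + 1)) : Prop :=
  (y.val = x.val + 1 ∧ upEdge α x.val) ∨ (x.val = y.val + 1 ∧ ¬ upEdge α y.val)

/-- The order of the fence poset `F(α)`, i.e. the partial order generated by
the defining relations. -/
def fenceLE (α : List ℕ) : Fin (α.sum + 1) → Fin (α.sum + 1) → Prop :=
  Relation.ReflTransGen (fenceStep α)

/-- Lower (order) ideals of the fence poset `F(α)`. -/
def IsFenceIdeal (α : List ℕ) (I : Finset (Fin (α.sum + 1))) : Prop :=
  ∀ x y, fenceLE α x y → y ∈ I → x ∈ I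

/-- `fenceRank α k` is the number of lower ideals of `F(α)` of size `k`;
the rank sequence of `F(α)` is `fenceRank α 0, …, fenceRank α (α.sum + 1)`. -/
def fenceRank (α : List ℕ) (k : ℕ) : ℕ :=
  Nat.card {I : Finset (Fin (α.sum + 1)) // IsFenceIdeal α I ∧ I.card = k}

/-- Defining relations of the circular fence poset `F̄(α)` on `Fin α.sum`:
as for the fence, but node `α.sum` (that is, `x_{n+1}`) is identified with node `0`. -/
def cStep (α : List ℕ) (x y : Fin α.sum) : Prop :=
  (y.val = (x.val + 1) % α.sum ∧ upEdge α x.val) ∨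
  (x.val = (y.val + 1) % α.sum ∧ ¬ upEdge α y.val)

/-- The order of the circular fence poset `F̄(α)`. -/
def cLE (α : List ℕ) : Fin α.sum → Fin α.sum → Prop :=
  Relation.ReflTransGen (cStep α)

/-- Lower (order) ideals of the circular fence poset `F̄(α)`. -/
def IsCIdeal (α : List ℕ) (I : Finset (Fin α.sum)) : Prop :=
  ∀ x y, cLE α x y → y ∈ I → x ∈ I

/-- `cRank α k` is the number of lower ideals of `F̄(α)` of size `k`;
the rank sequence of `F̄(α)` is `cRank α 0, …, cRank α α.sum`. -/
def cRank (α : List ℕ) (k : ℕ) : ℕ :=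
  Nat.card {I : Finset (Fin α.sum) // IsCIdeal α I ∧ I.card = k}

/-- The sequence `a 0, …, a m` is unimodal. -/
def Unimodal (a : ℕ → ℕ) (m : ℕ) : Prop :=
  ∃ j ≤ m, (∀ i < j, a i ≤ a (i + 1)) ∧ ∀ i, j ≤ i → i < m → a (i + 1) ≤ a i

/-- The sequence `a 0, …, a m` is bottom interlacing:
`a m ≤ a 0 ≤ a (m-1) ≤ a 1 ≤ ⋯ ≤ a ⌊m/2⌋`. -/
def BottomInterlacing (a : ℕ → ℕ) (m : ℕ) : Prop :=
  (∀ i, 2 * i ≤ m → a (m - i) ≤ a i) ∧ ∀ i, 2 * i + 1 < m → a i ≤ a (m - 1 - i)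

/-- The sequence `a 0, …, a m` is top interlacing:
`a 0 ≤ a m ≤ a 1 ≤ a (m-1) ≤ ⋯ ≤ a ⌈m/2⌉`. -/
def TopInterlacing (a : ℕ → ℕ) (m : ℕ) : Prop :=
  (∀ i, 2 * i ≤ m → a i ≤ a (m - i)) ∧ ∀ i, 2 * i + 1 < m → a (m - i) ≤ a (i + 1)

/-- The sequence `a 0, …, a m` is symmetric. -/
def SymmetricSeq (a : ℕ → ℕ) (m : ℕ) : Prop := ∀ k ≤ m, a k = a (m - k)

/-- Rowmotion for the order relation `r` on `Fin m`: `rhoRel r I` is the lower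
ideal generated by the minimal elements of the complement of `I`. -/
def rhoRel {m : ℕ} (r : Fin m → Fin m → Prop) (I : Finset (Fin m)) : Finset (Fin m) :=
  Finset.univ.filter fun x => ∃ y, y ∉ I ∧ (∀ z, r z y → z ≠ y → z ∈ I) ∧ r x y

/-- The (forward) orbit of `I` under a rowmotion map `ρ`. -/
def orbitOf {m : ℕ} (ρ : Finset (Fin m) → Finset (Fin m)) (I : Finset (Fin m)) :
    Finset (Finset (Fin m)) :=
  Finset.univ.filter fun J => ∃ k, ρ^[k] I = J

/-- The number of maximal elements of `I` viewed as a subposet of the order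
with relation `r`. -/
def maxCount {m : ℕ} (r : Fin m → Fin m → Prop) (I : Finset (Fin m)) : ℕ :=
  (I.filter fun x => ∀ y ∈ I, r x y → y = x).card

end

noncomputable section
namespace CF

/-- The number of vertices of the circular fence for `[1,a,1,a]`. -/
abbrev S (a : ℕ) : ℕ := ([1, a, 1, a] : List ℕ).sum

lemma hS (a : ℕ) : S a = 2 * a + 2 := by simp [S]; ring

lemma upclosed_eq_Icc (T : Finset ℕ) (lo hi : ℕ) (hsub : T ⊆ Finset.Icc lo hi)
    (hup : ∀ v ∈ T, v < hi → v + 1 ∈ T) : T = Finset.Icc (hi + 1 - T.card) hi := by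
  rcases T.eq_empty_or_nonempty with h | h
  · subst h; simp [Finset.Icc_eq_empty_iff]
  · set m := T.min' h with hm
    have hmem : m ∈ T := T.min'_mem h
    have hmhi : m ≤ hi ∧ lo ≤ m := by
      have := hsub hmem; simp [Finset.mem_Icc] at this; omega
    have hsup : ∀ v, m ≤ v → v ≤ hi → v ∈ T := by
      intro v hv hv2
      induction v, hv using Nat.le_induction with
      | base => exact hmem
      | succ w hw ih => exact hup w (ih (by omega)) (by omega)
    have hT : T = Finset.Icc m hi := by
      apply Finset.Subset.antisymm
      · intro v hv
        have := hsub hv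
        simp [Finset.mem_Icc] at this ⊢
        exact ⟨T.min'_le v hv, this.2⟩
      · intro v hv; simp [Finset.mem_Icc] at hv; exact hsup v hv.1 hv.2
    have hcard : T.card = hi + 1 - m := by rw [hT, Nat.card_Icc]
    rw [hcard, hT]
    congr 1
    omega

lemma upEdge_iff (a e : ℕ) (he : e < 2 * a + 2) :
    upEdge [1, a, 1, a] e ↔ (e = 0 ∨ e = a + 1) := by
  unfold upEdge segIdx
  simp only [List.range_succ, List.length_cons, List.length_nil, List.filter_append,
    List.filter_cons, List.filter_nil, List.take_succ_cons, List.take_zero, List.sum_cons,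
    List.sum_nil, List.length_append, List.range_zero]
  split_ifs <;> simp_all only [decide_eq_true_eq, not_le, List.length_cons, List.length_nil] <;>
    simp [Nat.even_iff] <;> split_ifs <;> simp_all <;> omega

/-- The explicit cover relations of `F̄((1,a,1,a))`. -/
def myStep (a : ℕ) (x y : Fin (S a)) : Prop :=
  (x.val = 0 ∧ y.val = 1) ∨ (x.val = a + 1 ∧ y.val = a + 2) ∨
  (1 ≤ y.val ∧ y.val ≤ a ∧ x.val = y.val + 1) ∨
  (a + 2 ≤ y.val ∧ y.val ≤ 2 * a ∧ x.val = y.val + 1) ∨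
  (y.val = 2 * a + 1 ∧ x.val = 0)

lemma cStep_iff (a : ℕ) (_ha : 0 < a) (x y : Fin (S a)) :
    cStep [1, a, 1, a] x y ↔ myStep a x y := by
  have hS' : S a = 2 * a + 2 := hS a
  have hx : x.val < 2 * a + 2 := by have := x.isLt; omega
  have hy : y.val < 2 * a + 2 := by have := y.isLt; omega
  unfold cStep myStep
  rw [upEdge_iff a x.val hx, upEdge_iff a y.val hy]
  rcases Nat.lt_or_ge (x.val + 1) (S a) with h1 | h1 <;>
    rcases Nat.lt_or_ge (y.val + 1) (S a) with h2 | h2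
  · rw [Nat.mod_eq_of_lt h1, Nat.mod_eq_of_lt h2]; omega
  · rw [Nat.mod_eq_of_lt h1, show y.val + 1 = S a by omega, Nat.mod_self]; omega
  · rw [Nat.mod_eq_of_lt h2, show x.val + 1 = S a by omega, Nat.mod_self]; omega
  · rw [show x.val + 1 = S a by omega, show y.val + 1 = S a by omega, Nat.mod_self]; omega

lemma isCIdeal_iff (a : ℕ) (ha : 0 < a) (I : Finset (Fin (S a))) :
    IsCIdeal [1, a, 1, a] I ↔ ∀ x y : Fin (S a), myStep a x y → y ∈ I → x ∈ I := by
  constructor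
  · intro h x y hxy
    exact h x y (Relation.ReflTransGen.single ((cStep_iff a ha x y).2 hxy))
  · intro h x y hxy
    induction hxy with
    | refl => exact id
    | tail _ hstep ih =>
      exact fun hc => ih (h _ _ ((cStep_iff a ha _ _).1 hstep) hc)

/-- The ideal of `F̄((1,a,1,a))` with `i` elements on the chain `1..a+1` and
`j` elements on the chain `{0} ∪ [a+2, 2a+1]`. -/
noncomputable def idealOf (a i j : ℕ) : Finset (Fin (S a)) :=
  Finset.univ.filter fun v =>
    (v.val = 0 ∧ 1 ≤ j) ∨ (1 ≤ v.val ∧ v.val ≤ a + 1 ∧ a + 2 ≤ v.val + i) ∨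
    (a + 2 ≤ v.val ∧ 2 * a + 3 ≤ v.val + j)

noncomputable def iA (a : ℕ) (I : Finset (Fin (S a))) : ℕ :=
  (I.filter fun v => 1 ≤ v.val ∧ v.val ≤ a + 1).card

noncomputable def jB (a : ℕ) (I : Finset (Fin (S a))) : ℕ :=
  (I.filter fun v => v.val = 0 ∨ a + 2 ≤ v.val).card

lemma iA_add_jB (a : ℕ) (I : Finset (Fin (S a))) : iA a I + jB a I = I.card := by
  have h : (I.filter fun v => v.val = 0 ∨ a + 2 ≤ v.val)
      = I.filter fun v => ¬(1 ≤ v.val ∧ v.val ≤ a + 1) := by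
    apply Finset.filter_congr
    intro v _
    have := v.isLt; have := hS a
    constructor <;> intro hv <;> omega
  rw [iA, jB, h, Finset.card_filter_add_card_filter_not]

/-- The image of the `A`-part of an ideal under `val` is an interval. -/
lemma TA_eq (a : ℕ) (ha : 0 < a) (I : Finset (Fin (S a)))
    (hI : ∀ x y : Fin (S a), myStep a x y → y ∈ I → x ∈ I) :
    (I.filter fun v => 1 ≤ v.val ∧ v.val ≤ a + 1).image Fin.val
      = Finset.Icc (a + 2 - iA a I) (a + 1) := by
  have hS' := hS a
  have hcard : ((I.filter fun v => 1 ≤ v.val ∧ v.val ≤ a + 1).image Fin.val).card = iA a I :=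
    Finset.card_image_of_injective _ Fin.val_injective
  have key := upclosed_eq_Icc ((I.filter fun v => 1 ≤ v.val ∧ v.val ≤ a + 1).image Fin.val)
    1 (a + 1) ?_ ?_
  · rw [hcard] at key
    have heq : a + 1 + 1 - iA a I = a + 2 - iA a I := by omega
    rw [heq] at key
    exact key
  · intro v hv
    simp only [Finset.mem_image, Finset.mem_filter] at hv
    obtain ⟨w, ⟨_, hw⟩, rfl⟩ := hv
    simpa [Finset.mem_Icc] using hw
  · intro v hv hlt
    simp only [Finset.mem_image, Finset.mem_filter] at hv ⊢
    obtain ⟨w, ⟨hwI, hw⟩, rfl⟩ := hv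
    refine ⟨⟨w.val + 1, by omega⟩,
      ⟨?_, ⟨show 1 ≤ w.val + 1 by omega, show w.val + 1 ≤ a + 1 by omega⟩⟩, rfl⟩
    exact hI _ w (Or.inr (Or.inr (Or.inl ⟨hw.1, by omega, rfl⟩))) hwI

/-- The image of the `B`-part of an ideal (relabelling `0 ↦ 2a+2`) is an interval. -/
lemma TB_eq (a : ℕ) (ha : 0 < a) (I : Finset (Fin (S a)))
    (hI : ∀ x y : Fin (S a), myStep a x y → y ∈ I → x ∈ I) :
    (I.filter fun v => v.val = 0 ∨ a + 2 ≤ v.val).image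
        (fun v => if v.val = 0 then 2 * a + 2 else v.val)
      = Finset.Icc (2 * a + 3 - jB a I) (2 * a + 2) := by
  have hS' := hS a
  have hcard : ((I.filter fun v => v.val = 0 ∨ a + 2 ≤ v.val).image
      (fun v => if v.val = 0 then 2 * a + 2 else v.val)).card = jB a I := by
    apply Finset.card_image_of_injOn
    intro u hu w hw huw
    simp only [Finset.coe_filter, Set.mem_setOf_eq] at hu hw
    have hu' := u.isLt; have hw' := w.isLt
    simp only at huw
    apply Fin.ext
    split_ifs at huw <;> omega
  have key := upclosed_eq_Icc ((I.filter fun v => v.val = 0 ∨ a + 2 ≤ v.val).image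
      (fun v => if v.val = 0 then 2 * a + 2 else v.val)) (a + 2) (2 * a + 2) ?_ ?_
  · rw [hcard] at key
    exact key
  · intro v hv
    simp only [Finset.mem_image, Finset.mem_filter] at hv
    obtain ⟨w, ⟨_, hw⟩, rfl⟩ := hv
    have := w.isLt
    simp only [Finset.mem_Icc]
    split_ifs <;> omega
  · intro v hv hlt
    simp only [Finset.mem_image, Finset.mem_filter] at hv ⊢
    obtain ⟨w, ⟨hwI, hw⟩, rfl⟩ := hv
    have hwlt := w.isLt
    have hw0 : ¬ w.val = 0 := by intro h0; simp [h0] at hlt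
    rw [if_neg hw0] at hlt ⊢
    rcases Nat.lt_or_ge w.val (2 * a + 1) with hc | hc
    · refine ⟨⟨w.val + 1, by omega⟩, ⟨?_, Or.inr (show a + 2 ≤ w.val + 1 by omega)⟩, ?_⟩
      · exact hI _ w (Or.inr (Or.inr (Or.inr (Or.inl ⟨by omega, by omega, rfl⟩)))) hwI
      · show (if w.val + 1 = 0 then 2 * a + 2 else w.val + 1) = w.val + 1
        rw [if_neg (by omega)]
    · have hw21 : w.val = 2 * a + 1 := by omega
      refine ⟨⟨0, by omega⟩, ⟨?_, Or.inl rfl⟩, ?_⟩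
      · exact hI _ w (Or.inr (Or.inr (Or.inr (Or.inr ⟨hw21, rfl⟩)))) hwI
      · show (if (0 : ℕ) = 0 then 2 * a + 2 else (0 : ℕ)) = w.val + 1
        rw [if_pos rfl]
        omega

lemma iA_le (a : ℕ) (I : Finset (Fin (S a))) : iA a I ≤ a + 1 := by
  have h : (I.filter fun v => 1 ≤ v.val ∧ v.val ≤ a + 1).card ≤ (Finset.Icc 1 (a + 1)).card := by
    apply Finset.card_le_card_of_injOn Fin.val
    · intro v hv
      simp only [Finset.mem_coe, Finset.mem_filter] at hv
      simp only [Finset.mem_coe, Finset.mem_Icc]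
      omega
    · intro u _ w _ h
      exact Fin.val_injective h
  rw [Nat.card_Icc] at h
  rw [iA]
  omega

lemma jB_le (a : ℕ) (I : Finset (Fin (S a))) : jB a I ≤ a + 1 := by
  have h : (I.filter fun v => v.val = 0 ∨ a + 2 ≤ v.val).card
      ≤ (Finset.Icc (a + 2) (2 * a + 2)).card := by
    apply Finset.card_le_card_of_injOn (fun v => if v.val = 0 then 2 * a + 2 else v.val)
    · intro v hv
      have := v.isLt
      have hS' := hS a
      simp only [Finset.mem_coe, Finset.mem_filter] at hv
      simp only [Finset.mem_coe, Finset.mem_Icc]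
      split_ifs <;> omega
    · intro u hu w hw huw
      simp only [Finset.mem_coe, Finset.mem_filter] at hu hw
      have hu' := u.isLt; have hw' := w.isLt; have := hS a
      simp only at huw
      apply Fin.ext
      split_ifs at huw <;> omega
  rw [Nat.card_Icc] at h
  rw [jB]
  omega

/-- Every ideal is of the form `idealOf a i j`. -/
lemma ideal_eq (a : ℕ) (ha : 0 < a) (I : Finset (Fin (S a)))
    (hI : ∀ x y : Fin (S a), myStep a x y → y ∈ I → x ∈ I) :
    I = idealOf a (iA a I) (jB a I) := by
  have hS' := hS a
  have hiA := iA_le a I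
  have hjB := jB_le a I
  have hA := TA_eq a ha I hI
  have hB := TB_eq a ha I hI
  ext v
  have hv := v.isLt
  simp only [idealOf, Finset.mem_filter, Finset.mem_univ, true_and]
  rcases Nat.lt_or_ge v.val 1 with hc | hc
  · -- v.val = 0
    have hv0 : v.val = 0 := by omega
    have hmem : v ∈ I ↔ (2 * a + 2 : ℕ) ∈ Finset.Icc (2 * a + 3 - jB a I) (2 * a + 2) := by
      rw [← hB]
      simp only [Finset.mem_image, Finset.mem_filter]
      constructor
      · intro h; exact ⟨v, ⟨h, Or.inl hv0⟩, by simp [hv0]⟩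
      · rintro ⟨w, ⟨hwI, hw⟩, hweq⟩
        have := w.isLt
        have hw0 : w.val = 0 := by by_contra h0; rw [if_neg h0] at hweq; omega
        have : w = v := Fin.ext (by omega)
        rwa [← this]
    rw [hmem]
    simp only [Finset.mem_Icc]
    omega
  · rcases Nat.lt_or_ge v.val (a + 2) with hc2 | hc2
    · -- 1 ≤ v.val ≤ a+1
      have hmem : v ∈ I ↔ v.val ∈ Finset.Icc (a + 2 - iA a I) (a + 1) := by
        rw [← hA]
        simp only [Finset.mem_image, Finset.mem_filter]
        constructor
        · intro h; exact ⟨v, ⟨h, by omega, by omega⟩, rfl⟩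
        · rintro ⟨w, ⟨hwI, hw⟩, hweq⟩
          have : w = v := Fin.ext hweq
          rwa [← this]
      rw [hmem]
      simp only [Finset.mem_Icc]
      omega
    · -- a+2 ≤ v.val
      have hmem : v ∈ I ↔ v.val ∈ Finset.Icc (2 * a + 3 - jB a I) (2 * a + 2) := by
        rw [← hB]
        simp only [Finset.mem_image, Finset.mem_filter]
        constructor
        · intro h
          refine ⟨v, ⟨h, Or.inr hc2⟩, ?_⟩
          rw [if_neg (by omega)]
        · rintro ⟨w, ⟨hwI, hw⟩, hweq⟩
          have := w.isLt
          have hw0 : ¬ w.val = 0 := by intro h0; rw [if_pos h0] at hweq; omega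
          rw [if_neg hw0] at hweq
          have : w = v := Fin.ext hweq
          rwa [← this]
      rw [hmem]
      simp only [Finset.mem_Icc]
      omega

lemma card_filter_val_eq (n lo hi : ℕ) (hhi : hi < n) :
    (Finset.univ.filter fun v : Fin n => lo ≤ v.val ∧ v.val ≤ hi).card = hi + 1 - lo := by
  have himg : (Finset.univ.filter fun v : Fin n => lo ≤ v.val ∧ v.val ≤ hi).image Fin.val
      = Finset.Icc lo hi := by
    ext w
    simp only [Finset.mem_image, Finset.mem_filter, Finset.mem_univ, true_and, Finset.mem_Icc]
    constructor
    · rintro ⟨u, hu, rfl⟩; exact hu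
    · intro hw; exact ⟨⟨w, by omega⟩, hw, rfl⟩
  have := Finset.card_image_of_injective
    (Finset.univ.filter fun v : Fin n => lo ≤ v.val ∧ v.val ≤ hi) Fin.val_injective
  rw [himg, Nat.card_Icc] at this
  omega

lemma iA_idealOf (a i j : ℕ) (hi : i ≤ a + 1) : iA a (idealOf a i j) = i := by
  have hS' := hS a
  rw [iA, idealOf, Finset.filter_filter]
  have : (Finset.univ.filter fun v : Fin (S a) =>
      ((v.val = 0 ∧ 1 ≤ j) ∨ (1 ≤ v.val ∧ v.val ≤ a + 1 ∧ a + 2 ≤ v.val + i) ∨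
        (a + 2 ≤ v.val ∧ 2 * a + 3 ≤ v.val + j)) ∧ 1 ≤ v.val ∧ v.val ≤ a + 1)
      = Finset.univ.filter fun v : Fin (S a) => a + 2 - i ≤ v.val ∧ v.val ≤ a + 1 := by
    apply Finset.filter_congr
    intro v _
    have := v.isLt
    constructor <;> intro hv <;> omega
  rw [this, card_filter_val_eq (S a) (a + 2 - i) (a + 1) (by omega)]
  omega

lemma jB_idealOf (a i j : ℕ) (hj : j ≤ a + 1) : jB a (idealOf a i j) = j := by
  have hS' := hS a
  rw [jB, idealOf, Finset.filter_filter]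
  rcases Nat.eq_zero_or_pos j with hj0 | hj0
  · have : (Finset.univ.filter fun v : Fin (S a) =>
        ((v.val = 0 ∧ 1 ≤ j) ∨ (1 ≤ v.val ∧ v.val ≤ a + 1 ∧ a + 2 ≤ v.val + i) ∨
          (a + 2 ≤ v.val ∧ 2 * a + 3 ≤ v.val + j)) ∧ (v.val = 0 ∨ a + 2 ≤ v.val))
        = (∅ : Finset (Fin (S a))) := by
      apply Finset.filter_false_of_mem
      intro v _
      have := v.isLt
      intro hv
      omega
    rw [this, Finset.card_empty]
    exact hj0.symm
  · have hsplit : (Finset.univ.filter fun v : Fin (S a) =>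
        ((v.val = 0 ∧ 1 ≤ j) ∨ (1 ≤ v.val ∧ v.val ≤ a + 1 ∧ a + 2 ≤ v.val + i) ∨
          (a + 2 ≤ v.val ∧ 2 * a + 3 ≤ v.val + j)) ∧ (v.val = 0 ∨ a + 2 ≤ v.val))
        = Finset.univ.filter fun v : Fin (S a) =>
            (0 ≤ v.val ∧ v.val ≤ 0) ∨ (2 * a + 3 - j ≤ v.val ∧ v.val ≤ 2 * a + 1) := by
      apply Finset.filter_congr
      intro v _
      have := v.isLt
      constructor <;> intro hv <;> omega
    rw [hsplit, Finset.filter_or, Finset.card_union_of_disjoint]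
    · rw [card_filter_val_eq (S a) 0 0 (by omega),
        card_filter_val_eq (S a) (2 * a + 3 - j) (2 * a + 1) (by omega)]
      omega
    · rw [Finset.disjoint_left]
      intro v hv hv2
      simp only [Finset.mem_filter] at hv hv2
      omega

lemma card_idealOf (a i j : ℕ) (hi : i ≤ a + 1) (hj : j ≤ a + 1) :
    (idealOf a i j).card = i + j := by
  rw [← iA_add_jB a (idealOf a i j), iA_idealOf a i j hi, jB_idealOf a i j hj]

lemma idealOf_closed (a i j : ℕ) (ha : 0 < a) (hi : i ≤ a + 1) (hj : j ≤ a + 1)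
    (h1 : i = a + 1 → 1 ≤ j) (h2 : j = a + 1 → 1 ≤ i) :
    ∀ x y : Fin (S a), myStep a x y → y ∈ idealOf a i j → x ∈ idealOf a i j := by
  intro x y hstep hy
  have hS' := hS a
  have hx := x.isLt; have hyv := y.isLt
  simp only [idealOf, Finset.mem_filter, Finset.mem_univ, true_and] at hy ⊢
  rcases hstep with ⟨hx0, hy1⟩ | ⟨hxa, hya⟩ | ⟨hy1, hy2, hx1⟩ | ⟨hy1, hy2, hx1⟩ | ⟨hy1, hx1⟩
  · -- 0 ⪯ 1
    have hieq : i = a + 1 := by omega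
    have := h1 hieq
    omega
  · -- a+1 ⪯ a+2
    have hjeq : j = a + 1 := by omega
    have := h2 hjeq
    omega
  · omega
  · omega
  · omega

/-- The finset of valid `(i, j)` pairs of total size `k`. -/
noncomputable def pairs (a k : ℕ) : Finset (ℕ × ℕ) :=
  (Finset.range (a + 2) ×ˢ Finset.range (a + 2)).filter fun p =>
    p.1 + p.2 = k ∧ (p.1 = a + 1 → 1 ≤ p.2) ∧ (p.2 = a + 1 → 1 ≤ p.1)

lemma cRank_eq_pairs (a : ℕ) (ha : 0 < a) (k : ℕ) :
    cRank [1, a, 1, a] k = (pairs a k).card := by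
  have hS' := hS a
  rw [cRank]
  have e : {I : Finset (Fin (S a)) // IsCIdeal [1, a, 1, a] I ∧ I.card = k}
      ≃ {p : ℕ × ℕ // p ∈ pairs a k} := by
    refine ⟨fun I => ⟨(iA a I.1, jB a I.1), ?_⟩,
      fun p => ⟨idealOf a p.1.1 p.1.2, ?_⟩, ?_, ?_⟩
    · obtain ⟨I, hIdeal, hIcard⟩ := I
      have hI := (isCIdeal_iff a ha I).1 hIdeal
      have hiA := iA_le a I
      have hjB := jB_le a I
      have hsum := iA_add_jB a I
      simp only [pairs, Finset.mem_filter, Finset.mem_product, Finset.mem_range]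
      refine ⟨⟨by omega, by omega⟩, by omega, ?_, ?_⟩
      · intro hieq
        -- element 1 is in I, hence 0 is in I, hence jB ≥ 1
        have h1 : (⟨1, by omega⟩ : Fin (S a)) ∈ I := by
          apply (Finset.ext_iff.1 (ideal_eq a ha I hI) _).2
          simp only [idealOf, Finset.mem_filter, Finset.mem_univ, true_and]
          omega
        have h0 : (⟨0, by omega⟩ : Fin (S a)) ∈ I :=
          hI _ _ (Or.inl ⟨rfl, rfl⟩) h1
        have : (⟨0, by omega⟩ : Fin (S a)) ∈ I.filter fun v => v.val = 0 ∨ a + 2 ≤ v.val := by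
          exact Finset.mem_filter.2 ⟨h0, Or.inl rfl⟩
        have := Finset.card_pos.2 ⟨_, this⟩
        rw [jB]; omega
      · intro hjeq
        have h2 : (⟨a + 2, by omega⟩ : Fin (S a)) ∈ I := by
          apply (Finset.ext_iff.1 (ideal_eq a ha I hI) _).2
          simp only [idealOf, Finset.mem_filter, Finset.mem_univ, true_and]
          omega
        have h1 : (⟨a + 1, by omega⟩ : Fin (S a)) ∈ I :=
          hI _ _ (Or.inr (Or.inl ⟨rfl, rfl⟩)) h2
        have : (⟨a + 1, by omega⟩ : Fin (S a)) ∈ I.filter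
            fun v => 1 ≤ v.val ∧ v.val ≤ a + 1 := by
          exact Finset.mem_filter.2 ⟨h1, show 1 ≤ a + 1 by omega, le_refl (a + 1)⟩
        have := Finset.card_pos.2 ⟨_, this⟩
        rw [iA]; omega
    · obtain ⟨⟨i, j⟩, hp⟩ := p
      simp only [pairs, Finset.mem_filter, Finset.mem_product, Finset.mem_range] at hp
      constructor
      · exact (isCIdeal_iff a ha _).2
          (idealOf_closed a i j ha (by omega) (by omega) hp.2.2.1 hp.2.2.2)
      · rw [card_idealOf a i j (by omega) (by omega)]
        exact hp.2.1
    · rintro ⟨I, hIdeal, hIcard⟩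
      have hI := (isCIdeal_iff a ha I).1 hIdeal
      exact Subtype.ext (ideal_eq a ha I hI).symm
    · rintro ⟨⟨i, j⟩, hp⟩
      simp only [pairs, Finset.mem_filter, Finset.mem_product, Finset.mem_range] at hp
      apply Subtype.ext
      simp only
      rw [iA_idealOf a i j (by omega), jB_idealOf a i j (by omega)]
  rw [Nat.card_congr e, Nat.card_eq_finsetCard]

lemma pairs_eq_image (a k lo hi : ℕ)
    (h : ∀ i j : ℕ, (i < a + 2 ∧ j < a + 2 ∧ i + j = k ∧ (i = a + 1 → 1 ≤ j) ∧
        (j = a + 1 → 1 ≤ i)) ↔ (lo ≤ i ∧ i ≤ hi ∧ j = k - i)) :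
    pairs a k = (Finset.Icc lo hi).image fun i => (i, k - i) := by
  ext ⟨i, j⟩
  simp only [pairs, Finset.mem_filter, Finset.mem_product, Finset.mem_range, Finset.mem_image,
    Finset.mem_Icc, Prod.mk.injEq]
  constructor
  · rintro ⟨⟨hi1, hj1⟩, hsum, hc1, hc2⟩
    have := (h i j).1 ⟨hi1, hj1, hsum, hc1, hc2⟩
    exact ⟨i, ⟨this.1, this.2.1⟩, rfl, this.2.2.symm⟩
  · rintro ⟨x, ⟨hx1, hx2⟩, rfl, rfl⟩
    have := (h x (k - x)).2 ⟨hx1, hx2, rfl⟩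
    exact ⟨⟨this.1, this.2.1⟩, this.2.2.1, this.2.2.2⟩

lemma pairs_card_image (a k lo hi : ℕ)
    (h : ∀ i j : ℕ, (i < a + 2 ∧ j < a + 2 ∧ i + j = k ∧ (i = a + 1 → 1 ≤ j) ∧
        (j = a + 1 → 1 ≤ i)) ↔ (lo ≤ i ∧ i ≤ hi ∧ j = k - i)) :
    (pairs a k).card = hi + 1 - lo := by
  rw [pairs_eq_image a k lo hi h,
    Finset.card_image_of_injective _ (fun x y hxy => congrArg Prod.fst hxy), Nat.card_Icc]

end CF
end

/-- the rank sequence of `F̄((1,a,1,a))` is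
`(1,2,…,a,a+1,a,a+1,a,a−1,…,2,1)`, and it is not unimodal. -/
theorem circular_rank_1a1a (a : ℕ) (ha : 0 < a) :
    (∀ k ≤ a, cRank [1, a, 1, a] k = k + 1) ∧
    cRank [1, a, 1, a] (a + 1) = a ∧
    (∀ k, a + 1 < k → k ≤ 2 * a + 2 →
      cRank [1, a, 1, a] k = cRank [1, a, 1, a] (2 * a + 2 - k)) ∧
    ¬ Unimodal (cRank [1, a, 1, a]) (2 * a + 2) := by
  have hlow : ∀ k ≤ a, cRank [1, a, 1, a] k = k + 1 := by
    intro k hk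
    rw [CF.cRank_eq_pairs a ha k, CF.pairs_card_image a k 0 k (by intro i j; omega)]
    omega
  have hmid : cRank [1, a, 1, a] (a + 1) = a := by
    rw [CF.cRank_eq_pairs a ha (a + 1),
      CF.pairs_card_image a (a + 1) 1 a (by intro i j; omega)]
    omega
  have hhigh : ∀ k, a + 1 < k → k ≤ 2 * a + 2 → cRank [1, a, 1, a] k = 2 * a + 3 - k := by
    intro k h1 h2
    rw [CF.cRank_eq_pairs a ha k,
      CF.pairs_card_image a k (k - (a + 1)) (a + 1) (by intro i j; omega)]
    omega
  refine ⟨hlow, hmid, ?_, ?_⟩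
  · intro k h1 h2
    rw [hhigh k h1 h2, hlow (2 * a + 2 - k) (by omega)]
    omega
  · rintro ⟨j, hj, hinc, hdec⟩
    rcases le_or_gt j (a + 1) with hc | hc
    · have := hdec (a + 1) hc (by omega)
      rw [hhigh (a + 2) (by omega) (by omega), hmid] at this
      omega
    · have := hinc a (by omega)
      rw [hmid, hlow a le_rfl] at this
      omega
end

section
/- Let a, b be positive integers, d = gcd(a,b) and m = lcm(a,b). Rowmotion on the lower ideals of the circular fence poset F̄((a,b)) has exactly one orbit of size m+2 and exactly d−1 orbits of size m, and no other orbits. Moreover, the statistic I ↦ |I| is (a+b)/2-mesic: for every rowmotion orbit O, ∑_{I∈O}|I| = |O|·(a+b)/2. -/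
attribute [local instance] Classical.propDecidable

namespace RT

lemma upEdge_iff (a b e : ℕ) : upEdge [a,b] e ↔ (e < a ∨ a + b ≤ e) := by
  by_cases h : a ≤ e <;> by_cases h2 : a + b ≤ e <;>
    simp [upEdge, segIdx, List.range_succ, List.filter, h, h2, Nat.even_iff] <;> omega

end RT
namespace RT

lemma hsum (a b : ℕ) : ([a,b]).sum = a + b := by simp

/-- mod-free description of the generating relations of `F̄((a,b))`. -/
lemma cStep_iff {a b : ℕ} (ha : 0 < a) (hb : 0 < b) (x y : Fin ([a,b].sum)) :
    cStep [a,b] x y ↔ (y.val = x.val + 1 ∧ x.val < a) ∨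
      (x.val = y.val + 1 ∧ a ≤ y.val ∧ y.val + 1 < a + b) ∨
      (x.val = 0 ∧ y.val = a + b - 1) := by
  have hx := x.isLt; have hy := y.isLt
  simp only [hsum] at hx hy
  unfold cStep
  simp only [hsum, upEdge_iff]
  constructor
  · rintro (⟨h1, h2⟩ | ⟨h1, h2⟩)
    · left
      have hxa : x.val < a := by omega
      have : (x.val + 1) % (a + b) = x.val + 1 := Nat.mod_eq_of_lt (by omega)
      omega
    · have hya : a ≤ y.val := by omega
      rcases Nat.lt_or_ge (y.val + 1) (a + b) with h | h
      · have : (y.val + 1) % (a + b) = y.val + 1 := Nat.mod_eq_of_lt h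
        right; left; omega
      · have hy1 : y.val + 1 = a + b := by omega
        have : (y.val + 1) % (a + b) = 0 := by rw [hy1, Nat.mod_self]
        right; right; omega
  · rintro (⟨h1, h2⟩ | ⟨h1, h2, h3⟩ | ⟨h1, h2⟩)
    · left
      have : (x.val + 1) % (a + b) = x.val + 1 := Nat.mod_eq_of_lt (by omega)
      omega
    · right
      have : (y.val + 1) % (a + b) = y.val + 1 := Nat.mod_eq_of_lt h3
      omega
    · right
      have : (y.val + 1) % (a + b) = 0 := by
        have : y.val + 1 = a + b := by omega
        rw [this, Nat.mod_self]
      omega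

/-- the closed-form order relation of `F̄((a,b))`. -/
def P (a b : ℕ) (x y : Fin ([a,b].sum)) : Prop :=
  (x.val ≤ y.val ∧ y.val ≤ a) ∨ (a ≤ y.val ∧ (y.val ≤ x.val ∨ x.val = 0))

lemma le_up {a b : ℕ} (ha : 0 < a) (hb : 0 < b) :
    ∀ (k : ℕ) (x y : Fin ([a,b].sum)), y.val = x.val + k → y.val ≤ a → cLE [a,b] x y := by
  intro k
  induction k with
  | zero => intro x y h _; have : x = y := Fin.ext (by omega); rw [this]; exact Relation.ReflTransGen.refl
  | succ k ih =>
    intro x y h hy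
    have hx1 : x.val + 1 < [a,b].sum := by simp only [hsum]; omega
    refine Relation.ReflTransGen.head ?_ (ih ⟨x.val+1, hx1⟩ y (by simp; omega) hy)
    rw [cStep_iff ha hb]; left; constructor; · simp
    · omega

lemma le_down {a b : ℕ} (ha : 0 < a) (hb : 0 < b) :
    ∀ (k : ℕ) (x y : Fin ([a,b].sum)), x.val = y.val + k → a ≤ y.val → cLE [a,b] x y := by
  intro k
  induction k with
  | zero => intro x y h _; have : x = y := Fin.ext (by omega); rw [this]; exact Relation.ReflTransGen.refl
  | succ k ih =>
    intro x y h hy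
    have hx := x.isLt; simp only [hsum] at hx
    have hz : y.val + k < [a,b].sum := by simp only [hsum]; omega
    refine Relation.ReflTransGen.head ?_ (ih ⟨y.val+k, hz⟩ y (by simp) hy)
    rw [cStep_iff ha hb]; right; left
    refine ⟨by simp; omega, by simp; omega, by simp; omega⟩

lemma le_total_P {a b : ℕ} (ha : 0 < a) (hb : 0 < b) (x y : Fin ([a,b].sum))
    (h : P a b x y) : cLE [a,b] x y := by
  have hx := x.isLt; have hy := y.isLt; simp only [hsum] at hx hy
  rcases h with ⟨h1, h2⟩ | ⟨h1, h2⟩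
  · exact le_up ha hb (y.val - x.val) x y (by omega) h2
  · rcases h2 with h2 | h2
    · exact le_down ha hb (x.val - y.val) x y (by omega) h1
    · -- x = 0
      rcases Nat.lt_or_ge y.val a with hya | hya
      · exact le_up ha hb (y.val - x.val) x y (by omega) (by omega)
      · have hn1 : a + b - 1 < [a,b].sum := by simp only [hsum]; omega
        refine Relation.ReflTransGen.head ?_
          (le_down ha hb (a + b - 1 - y.val) ⟨a+b-1, hn1⟩ y (by simp; omega) hya)
        rw [cStep_iff ha hb]; right; right; exact ⟨h2, by simp⟩

lemma cLE_iff {a b : ℕ} (ha : 0 < a) (hb : 0 < b) (x y : Fin ([a,b].sum)) :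
    cLE [a,b] x y ↔ P a b x y := by
  constructor
  · intro h
    induction h using Relation.ReflTransGen.head_induction_on with
    | refl =>
      have hy := y.isLt; simp only [hsum] at hy
      unfold P; rcases le_or_gt y.val a with h | h
      · left; omega
      · right; omega
    | head hstep _ ih =>
      rename_i u v _
      rw [cStep_iff ha hb] at hstep
      have hu := u.isLt; have hv := v.isLt; have hy := y.isLt; simp only [hsum] at hu hv hy
      unfold P at ih ⊢
      omega
  · exact le_total_P ha hb x y

end RT
namespace RT

open Finset

/-- the ideal `{0,…,i} ∪ {a+b-j,…,a+b-1}` of `F̄((a,b))`. -/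
def idl (a b i j : ℕ) : Finset (Fin ([a,b].sum)) :=
  Finset.univ.filter (fun x => x.val ≤ i ∨ a + b - j ≤ x.val)

lemma mem_idl {a b i j : ℕ} (x : Fin ([a,b].sum)) :
    x ∈ idl a b i j ↔ (x.val ≤ i ∨ a + b - j ≤ x.val) := by
  simp [-List.sum_cons, idl]

lemma isCIdeal_empty (a b : ℕ) : IsCIdeal [a,b] (∅ : Finset (Fin ([a,b].sum))) := by
  intro x y _ hy; simp [-List.sum_cons] at hy

lemma isCIdeal_univ (a b : ℕ) : IsCIdeal [a,b] (Finset.univ : Finset (Fin ([a,b].sum))) := by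
  intro x y _ _; simp [-List.sum_cons]

lemma isCIdeal_idl {a b : ℕ} (ha : 0 < a) (hb : 0 < b) {i j : ℕ} (hi : i < a) (hj : j < b) :
    IsCIdeal [a,b] (idl a b i j) := by
  intro x y hxy hy
  rw [cLE_iff ha hb] at hxy
  rw [mem_idl] at hy ⊢
  have hxle := x.isLt; have hyle := y.isLt; simp only [hsum] at hxle hyle
  unfold P at hxy
  omega

lemma classify {a b : ℕ} (ha : 0 < a) (hb : 0 < b) {I : Finset (Fin ([a,b].sum))}
    (hI : IsCIdeal [a,b] I) :
    I = ∅ ∨ I = Finset.univ ∨ ∃ i j, i < a ∧ j < b ∧ I = idl a b i j := by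
  have hdown : ∀ x y : Fin ([a,b].sum), P a b x y → y ∈ I → x ∈ I := by
    intro x y h hy; exact hI x y (by rw [cLE_iff ha hb]; exact h) hy
  have hab : a < [a,b].sum := by simp only [hsum]; omega
  set A : Fin ([a,b].sum) := ⟨a, hab⟩ with hA
  by_cases hAI : A ∈ I
  · right; left
    apply Finset.eq_univ_of_forall
    intro x
    refine hdown x A ?_ hAI
    have hx := x.isLt; simp only [hsum] at hx
    unfold P; simp only [hA]
    rcases le_or_gt x.val a with h | h
    · left; exact ⟨h, le_refl a⟩
    · right; omega
  · rcases Finset.eq_empty_or_nonempty I with hemp | ⟨w, hw⟩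
    · left; exact hemp
    right; right
    -- 0 ∈ I
    have h0n : (0:ℕ) < [a,b].sum := by simp only [hsum]; omega
    have h0 : (⟨0, h0n⟩ : Fin ([a,b].sum)) ∈ I := by
      refine hdown _ w ?_ hw
      have hwlt := w.isLt; simp only [hsum] at hwlt
      unfold P; rcases le_or_gt w.val a with h | h
      · left; simpa using h
      · right; simp; omega
    -- left part
    have hMne : (I.filter (fun x => x.val < a)).Nonempty :=
      ⟨⟨0, h0n⟩, by simp [-List.sum_cons, h0, ha]⟩
    set xi := (I.filter (fun x => x.val < a)).max' hMne with hxidef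
    have hmax := Finset.max'_mem _ hMne
    rw [← hxidef, Finset.mem_filter] at hmax
    set i : ℕ := xi.val with hidef
    have hiI : xi ∈ I := hmax.1
    have hia : i < a := hmax.2
    have hile : ∀ x : Fin ([a,b].sum), x ∈ I → x.val < a → x.val ≤ i := by
      intro x hx hxa
      exact Finset.le_max' _ x (by simp [-List.sum_cons, hx, hxa])
    -- right part
    by_cases hRne : (I.filter (fun x => a < x.val)).Nonempty
    · set xm := (I.filter (fun x => a < x.val)).min' hRne with hxmdef
      have hmin := Finset.min'_mem _ hRne
      rw [← hxmdef, Finset.mem_filter] at hmin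
      set m : ℕ := xm.val with hmdef
      have hmI : xm ∈ I := hmin.1
      have ham : a < m := hmin.2
      have hmlt : m < a + b := by have := xm.isLt; simp only [hsum] at this; exact this
      have hmle : ∀ x : Fin ([a,b].sum), x ∈ I → a < x.val → m ≤ x.val := by
        intro x hx hxa
        exact Finset.min'_le _ x (by simp [-List.sum_cons, hx, hxa])
      refine ⟨i, a + b - m, hia, by omega, ?_⟩
      ext x
      rw [mem_idl]
      have hxlt := x.isLt; simp only [hsum] at hxlt
      constructor
      · intro hx
        rcases lt_trichotomy x.val a with h | h | h
        · left; exact hile x hx h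
        · exfalso; apply hAI; have : x = A := Fin.ext (by simp [hA, h]); rwa [this] at hx
        · right; have := hmle x hx h; omega
      · intro hx
        rcases hx with hx | hx
        · refine hdown x xi ?_ hiI
          unfold P; left; exact ⟨hx, by omega⟩
        · refine hdown x xm ?_ hmI
          unfold P; right; exact ⟨by omega, Or.inl (by omega)⟩
    · refine ⟨i, 0, hia, hb, ?_⟩
      ext x
      rw [mem_idl]
      have hxlt := x.isLt; simp only [hsum] at hxlt
      constructor
      · intro hx
        rcases lt_trichotomy x.val a with h | h | h
        · left; exact hile x hx h
        · exfalso; apply hAI; have : x = A := Fin.ext (by simp [hA, h]); rwa [this] at hx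
        · exfalso; exact hRne ⟨x, by simp [-List.sum_cons, hx, h]⟩
      · intro hx
        rcases hx with hx | hx
        · refine hdown x xi ?_ hiI
          unfold P; left; exact ⟨hx, by omega⟩
        · omega

end RT
namespace RT

/-- element of `Fin ([a,b].sum)` from a bound `v < a + b`. -/
def elt (a b v : ℕ) (h : v < a + b) : Fin ([a,b].sum) := ⟨v, by simp only [hsum]; exact h⟩

@[simp] lemma elt_val (a b v : ℕ) (h : v < a + b) : (elt a b v h).val = v := rfl

lemma mem_rho_iff {a b : ℕ} (ha : 0 < a) (hb : 0 < b) (I : Finset (Fin ([a,b].sum)))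
    (x : Fin ([a,b].sum)) :
    x ∈ rhoRel (cLE [a,b]) I ↔
      ∃ y, y ∉ I ∧ (∀ z, P a b z y → z ≠ y → z ∈ I) ∧ P a b x y := by
  simp only [rhoRel, Finset.mem_filter, Finset.mem_univ, true_and, cLE_iff ha hb]

lemma rho_univ {a b : ℕ} (ha : 0 < a) (hb : 0 < b) :
    rhoRel (cLE [a,b]) (Finset.univ : Finset (Fin ([a,b].sum))) = ∅ := by
  ext x
  rw [mem_rho_iff ha hb]
  simp [-List.sum_cons]

lemma rho_empty {a b : ℕ} (ha : 0 < a) (hb : 0 < b) :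
    rhoRel (cLE [a,b]) (∅ : Finset (Fin ([a,b].sum))) = idl a b 0 0 := by
  ext x
  rw [mem_rho_iff ha hb, mem_idl]
  have hx := x.isLt; simp only [hsum] at hx
  constructor
  · rintro ⟨y, -, hymin, hxy⟩
    have hy0 : y.val = 0 := by
      by_contra hne
      have h0 : (0:ℕ) < a + b := by omega
      have := hymin (elt a b 0 h0) (by unfold P; simp; omega)
        (by intro h; apply hne; have := congrArg Fin.val h; simpa using this.symm)
      simp [-List.sum_cons] at this
    unfold P at hxy
    left; omega
  · intro hx0
    have hxv : x.val = 0 := by omega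
    have h0 : (0:ℕ) < a + b := by omega
    refine ⟨elt a b 0 h0, by simp [-List.sum_cons], ?_, ?_⟩
    · intro z hz hzne
      exfalso; apply hzne
      unfold P at hz; simp at hz
      apply Fin.ext; simp; omega
    · unfold P; simp; omega

lemma idl_ne_empty {a b i j : ℕ} (ha : 0 < a) (hb : 0 < b) :
    idl a b i j ≠ ∅ := by
  intro h
  have h0 : (0:ℕ) < a + b := by omega
  have : elt a b 0 h0 ∈ idl a b i j := by rw [mem_idl]; simp
  rw [h] at this; simp [-List.sum_cons] at this

lemma a_not_mem_idl {a b i j : ℕ} (hb : 0 < b) (hi : i < a) (hj : j < b) :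
    elt a b a (by omega) ∉ idl a b i j := by
  rw [mem_idl]; simp; omega

lemma idl_ne_univ {a b i j : ℕ} (hb : 0 < b) (hi : i < a) (hj : j < b) :
    idl a b i j ≠ Finset.univ := by
  intro h
  have := a_not_mem_idl (a := a) hb hi hj
  rw [h] at this; simp [-List.sum_cons] at this

lemma rho_idl_top {a b : ℕ} (ha : 0 < a) (hb : 0 < b) :
    rhoRel (cLE [a,b]) (idl a b (a-1) (b-1)) = Finset.univ := by
  ext x
  rw [mem_rho_iff ha hb]
  simp only [Finset.mem_univ, iff_true]
  have hx := x.isLt; simp only [hsum] at hx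
  refine ⟨elt a b a (by omega), ?_, ?_, ?_⟩
  · rw [mem_idl]; simp; omega
  · intro z hz hzne
    rw [mem_idl]
    have hzv : z.val ≠ a := fun h => hzne (Fin.ext (by simpa using h))
    have hzlt := z.isLt; simp only [hsum] at hzlt
    unfold P at hz; simp at hz
    omega
  · unfold P; simp
    omega

lemma rho_idl {a b i j : ℕ} (ha : 0 < a) (hb : 0 < b) (hi : i < a) (hj : j < b)
    (htop : ¬ (i + 1 = a ∧ j + 1 = b)) :
    rhoRel (cLE [a,b]) (idl a b i j) = idl a b ((i+1) % a) ((j+1) % b) := by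
  have hq : a + 1 ≤ a + b - j := by omega
  ext x
  rw [mem_rho_iff ha hb, mem_idl]
  have hx := x.isLt; simp only [hsum] at hx
  constructor
  · rintro ⟨y, hyI, hymin, hxy⟩
    rw [mem_idl] at hyI
    have hylt := y.isLt; simp only [hsum] at hylt
    push_neg at hyI
    -- y is i+1 (with i+1 < a) or a+b-1-j (with j+1 < b)
    have hycases : (y.val = i + 1 ∧ i + 1 < a) ∨ (y.val = a + b - 1 - j ∧ j + 1 < b) := by
      by_contra hcon
      push_neg at hcon
      -- find a smaller element not in I below y
      rcases le_or_gt y.val a with hya | hya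
      · -- left chain: z = i+1 below y unless y = i+1
        by_cases hyi : y.val = i + 1
        · -- then i+1 = a and j+1 < b: use z = a+b-1-j
          have hi1 : i + 1 = a := by
            rcases hcon with ⟨h1, h2⟩; omega
          have hj1 : j + 1 < b := by omega
          have hz := hymin (elt a b (a+b-1-j) (by omega))
            (by unfold P; simp; omega)
            (by intro h; have := congrArg Fin.val h; simp at this; omega)
          rw [mem_idl] at hz; simp at hz; omega
        · have hz := hymin (elt a b (i+1) (by omega))
            (by unfold P; simp; omega)
            (by intro h; have := congrArg Fin.val h; simp at this; omega)
          rw [mem_idl] at hz; simp at hz; omega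
      · -- right chain: z = a+b-1-j below y unless y = a+b-1-j
        by_cases hyj : y.val = a + b - 1 - j
        · have hj1 : j + 1 = b := by
            rcases hcon with ⟨h1, h2⟩; omega
          have hi1 : i + 1 < a := by omega
          -- y = a, contradiction with hya
          omega
        · have hz := hymin (elt a b (a+b-1-j) (by omega))
            (by unfold P; simp; omega)
            (by intro h; have := congrArg Fin.val h; simp at this; omega)
          rw [mem_idl] at hz; simp at hz; omega
    unfold P at hxy
    rcases hycases with ⟨hyv, hlt⟩ | ⟨hyv, hlt⟩
    · left
      rw [Nat.mod_eq_of_lt hlt]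
      omega
    · have hmb : (j+1) % b = j + 1 := Nat.mod_eq_of_lt hlt
      rcases hxy with ⟨h1, h2⟩ | ⟨h1, h2⟩
      · omega
      · rcases h2 with h2 | h2
        · right; omega
        · left; omega
  · intro hmem
    rcases Nat.lt_or_ge (i+1) a with hi1 | hi1
    · rw [Nat.mod_eq_of_lt hi1] at hmem
      rcases hmem with hmem | hmem
      · -- witness y = i+1
        refine ⟨elt a b (i+1) (by omega), ?_, ?_, ?_⟩
        · rw [mem_idl]; simp; omega
        · intro z hz hzne
          rw [mem_idl]
          have : z.val ≠ i+1 := fun h => hzne (Fin.ext (by simpa using h))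
          unfold P at hz; simp at hz
          omega
        · unfold P; simp; omega
      · -- x in right part; j+1 < b forced
        have hj1 : j + 1 < b := by
          by_contra h
          have : (j+1) % b = 0 := by
            have : j + 1 = b := by omega
            rw [this, Nat.mod_self]
          omega
        rw [Nat.mod_eq_of_lt hj1] at hmem
        refine ⟨elt a b (a+b-1-j) (by omega), ?_, ?_, ?_⟩
        · rw [mem_idl]; simp; omega
        · intro z hz hzne
          rw [mem_idl]
          have : z.val ≠ a+b-1-j := fun h => hzne (Fin.ext (by simpa using h))
          have hzlt := z.isLt; simp only [hsum] at hzlt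
          unfold P at hz; simp at hz
          omega
        · unfold P; simp; omega
    · -- i+1 = a, so j+1 < b, (i+1)%a = 0
      have hi1' : i + 1 = a := by omega
      have hj1 : j + 1 < b := by omega
      have hma : (i+1) % a = 0 := by rw [hi1', Nat.mod_self]
      rw [hma, Nat.mod_eq_of_lt hj1] at hmem
      refine ⟨elt a b (a+b-1-j) (by omega), ?_, ?_, ?_⟩
      · rw [mem_idl]; simp; omega
      · intro z hz hzne
        rw [mem_idl]
        have : z.val ≠ a+b-1-j := fun h => hzne (Fin.ext (by simpa using h))
        have hzlt := z.isLt; simp only [hsum] at hzlt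
        unfold P at hz; simp at hz
        omega
      · unfold P; simp; omega

end RT
namespace RT
open Finset

lemma idl_inj {a b i j i' j' : ℕ} (hb : 0 < b) (hi : i < a) (hj : j < b)
    (hi' : i' < a) (hj' : j' < b) (h : idl a b i j = idl a b i' j') : i = i' ∧ j = j' := by
  have hm : ∀ x : Fin ([a,b].sum), (x.val ≤ i ∨ a+b-j ≤ x.val) ↔ (x.val ≤ i' ∨ a+b-j' ≤ x.val) := by
    intro x
    rw [← mem_idl, ← mem_idl, h]
  have key : ∀ v : ℕ, v < a + b → ((v ≤ i ∨ a+b-j ≤ v) ↔ (v ≤ i' ∨ a+b-j' ≤ v)) := by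
    intro v hv; exact hm (elt a b v hv)
  constructor
  · by_contra hne
    rcases Nat.lt_or_ge i i' with hlt | hge
    · have := key i' (by omega); omega
    · have := key i (by omega); omega
  · by_contra hne
    rcases Nat.lt_or_ge j j' with hlt | hge
    · have := key (a+b-j') (by omega); omega
    · have := key (a+b-j) (by omega); omega

lemma card_filter_val {n : ℕ} (p : ℕ → Prop) [DecidablePred p] :
    (Finset.univ.filter (fun x : Fin n => p x.val)).card = ((Finset.range n).filter p).card := by
  apply Finset.card_bij (fun x _ => x.val)
  · intro x hx
    simp only [mem_filter, mem_range]
    simp only [mem_filter] at hx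
    exact ⟨x.isLt, hx.2⟩
  · intro x _ y _ h; exact Fin.ext h
  · intro v hv
    simp only [mem_filter, mem_range] at hv
    exact ⟨⟨v, hv.1⟩, by simp [hv.2], rfl⟩

lemma card_idl {a b i j : ℕ} (ha : 0 < a) (hb : 0 < b) (hi : i < a) (hj : j < b) :
    (idl a b i j).card = i + 1 + j := by
  unfold idl
  have h1 : (Finset.univ.filter (fun x : Fin ([a,b].sum) => x.val ≤ i ∨ a + b - j ≤ x.val)).card
      = ((Finset.range ([a,b].sum)).filter (fun v => v ≤ i ∨ a + b - j ≤ v)).card :=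
    card_filter_val (fun v => v ≤ i ∨ a + b - j ≤ v)
  rw [h1]
  have h2 : (Finset.range ([a,b].sum)).filter (fun v => v ≤ i ∨ a + b - j ≤ v)
      = Finset.range (i+1) ∪ Finset.Ico (a+b-j) (a+b) := by
    ext v
    simp only [mem_filter, mem_range, mem_union, Finset.mem_Ico, hsum]
    omega
  rw [h2, Finset.card_union_of_disjoint, Finset.card_range, Nat.card_Ico]
  · omega
  · rw [Finset.disjoint_left]
    intro v hv1 hv2
    simp only [mem_range] at hv1
    simp only [Finset.mem_Ico] at hv2
    omega

lemma sum_mod_range {a : ℕ} (ha : 0 < a) (c : ℕ) :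
    ∑ t ∈ Finset.range a, (c + t) % a = ∑ t ∈ Finset.range a, t := by
  induction c with
  | zero => exact Finset.sum_congr rfl (fun t ht => by
      simp only [Finset.mem_range] at ht
      simp [Nat.mod_eq_of_lt ht])
  | succ c ih =>
    have h1 : ∑ t ∈ Finset.range (a+1), (c + t) % a
        = (∑ t ∈ Finset.range a, (c + (t+1)) % a) + (c + 0) % a :=
      Finset.sum_range_succ' _ a
    have h2 : ∑ t ∈ Finset.range (a+1), (c + t) % a
        = (∑ t ∈ Finset.range a, (c + t) % a) + (c + a) % a :=
      Finset.sum_range_succ _ a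
    have h3 : (c + a) % a = (c + 0) % a := by
      rw [Nat.add_zero, Nat.add_mod_right]
    have h4 : ∀ t, (c + 1 + t) % a = (c + (t+1)) % a := by
      intro t; ring_nf
    calc ∑ t ∈ Finset.range a, (c + 1 + t) % a
        = ∑ t ∈ Finset.range a, (c + (t+1)) % a := Finset.sum_congr rfl (fun t _ => h4 t)
      _ = ∑ t ∈ Finset.range a, (c + t) % a := by omega
      _ = ∑ t ∈ Finset.range a, t := ih

lemma sum_mod_blocks {a : ℕ} (ha : 0 < a) (c k : ℕ) :
    ∑ s ∈ Finset.range (a * k), (c + s) % a = k * ∑ t ∈ Finset.range a, t := by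
  induction k with
  | zero => simp
  | succ k ih =>
    have hsplit : ∑ s ∈ Finset.Ico 0 (a*k), ((c+s) % a) + ∑ s ∈ Finset.Ico (a*k) (a*k+a), ((c+s) % a)
        = ∑ s ∈ Finset.Ico 0 (a*k+a), ((c+s) % a) :=
      Finset.sum_Ico_consecutive _ (Nat.zero_le _) (by omega)
    have hico : ∑ s ∈ Finset.Ico (a*k) (a*k+a), ((c+s) % a)
        = ∑ t ∈ Finset.range a, ((c + (a*k + t)) % a) := by
      rw [Finset.sum_Ico_eq_sum_range]
      simp only [Nat.add_sub_cancel_left]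
    have heq : ∀ t, (c + (a*k + t)) % a = (c + t) % a := by
      intro t
      have : c + (a*k + t) = (c + t) + a * k := by ring
      rw [this, Nat.add_mul_mod_self_left]
    have hmul : a * (k+1) = a*k + a := by ring
    rw [hmul, Finset.range_eq_Ico, ← hsplit, ← Finset.range_eq_Ico]
    rw [hico]
    calc (∑ s ∈ Finset.range (a*k), (c+s) % a) + ∑ t ∈ Finset.range a, ((c + (a*k+t)) % a)
        = (k * ∑ t ∈ Finset.range a, t) + ∑ t ∈ Finset.range a, ((c+t) % a) := by
          rw [ih]; congr 1; exact Finset.sum_congr rfl (fun t _ => heq t)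
      _ = (k * ∑ t ∈ Finset.range a, t) + ∑ t ∈ Finset.range a, t := by rw [sum_mod_range ha c]
      _ = (k+1) * ∑ t ∈ Finset.range a, t := by ring

lemma twice_sum_mod {a L : ℕ} (ha : 0 < a) (hdvd : a ∣ L) (c : ℕ) :
    2 * ∑ s ∈ Finset.range L, (c + s) % a = L * (a - 1) := by
  obtain ⟨k, hk⟩ := hdvd
  subst hk
  rw [sum_mod_blocks ha c k]
  have := Finset.sum_range_id_mul_two a
  calc 2 * (k * ∑ t ∈ Finset.range a, t) = k * ((∑ t ∈ Finset.range a, t) * 2) := by ring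
    _ = k * (a * (a-1)) := by rw [this]
    _ = a * k * (a-1) := by ring

lemma mod_cancel_lcm {a b s t : ℕ} (ha : 0 < a) (hb : 0 < b)
    (h1 : s % a = t % a) (h2 : s % b = t % b) : s % Nat.lcm a b = t % Nat.lcm a b := by
  rcases le_total s t with hle | hle
  · have d1 : a ∣ t - s := (Nat.modEq_iff_dvd' hle).mp h1
    have d2 : b ∣ t - s := (Nat.modEq_iff_dvd' hle).mp h2
    exact (Nat.modEq_iff_dvd' hle).mpr (Nat.lcm_dvd d1 d2)
  · have d1 : a ∣ s - t := (Nat.modEq_iff_dvd' hle).mp h1.symm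
    have d2 : b ∣ s - t := (Nat.modEq_iff_dvd' hle).mp h2.symm
    exact ((Nat.modEq_iff_dvd' hle).mpr (Nat.lcm_dvd d1 d2)).symm

lemma pred_mod {a L : ℕ} (ha : 0 < a) (hL : 0 < L) (hdvd : a ∣ L) : (L - 1) % a = a - 1 := by
  obtain ⟨k, hk⟩ := hdvd
  rcases k with _ | k'
  · omega
  have hL' : L = a * k' + a := by rw [hk]; ring
  have : L - 1 = a * k' + (a-1) := by omega
  rw [this, Nat.mul_add_mod, Nat.mod_eq_of_lt (by omega)]

end RT
namespace RT
open Finset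

section orbitlemmas
variable {m : ℕ} (ρ : Finset (Fin m) → Finset (Fin m))

lemma iterate_period {I : Finset (Fin m)} {p : ℕ} (hp : ρ^[p] I = I) :
    ∀ k, ρ^[k] I = ρ^[k % p] I := by
  have hq : ∀ q, ρ^[p * q] I = I := by
    intro q
    induction q with
    | zero => simp
    | succ q ih =>
      have : p * (q+1) = p * q + p := by ring
      rw [this, Function.iterate_add_apply, hp, ih]
  intro k
  conv_lhs => rw [show k = k % p + p * (k / p) from (Nat.mod_add_div k p).symm]
  rw [Function.iterate_add_apply, hq]

lemma orbit_eq_image {I : Finset (Fin m)} {p : ℕ} (hp : ρ^[p] I = I) (hp0 : 0 < p) :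
    orbitOf ρ I = (Finset.range p).image (fun t => ρ^[t] I) := by
  ext J
  simp only [orbitOf, Finset.mem_filter, Finset.mem_univ, true_and, Finset.mem_image,
    Finset.mem_range]
  constructor
  · rintro ⟨k, rfl⟩
    exact ⟨k % p, Nat.mod_lt _ hp0, (iterate_period ρ hp k).symm⟩
  · rintro ⟨t, _, rfl⟩
    exact ⟨t, rfl⟩

lemma orbit_card {I : Finset (Fin m)} {p : ℕ} (hp : ρ^[p] I = I) (hp0 : 0 < p)
    (hinj : ∀ s ∈ Finset.range p, ∀ t ∈ Finset.range p,
      ρ^[s] I = ρ^[t] I → s = t) :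
    (orbitOf ρ I).card = p := by
  rw [orbit_eq_image ρ hp hp0, Finset.card_image_of_injOn hinj, Finset.card_range]

lemma orbit_sum {I : Finset (Fin m)} {p : ℕ} (hp : ρ^[p] I = I) (hp0 : 0 < p)
    (hinj : ∀ s ∈ Finset.range p, ∀ t ∈ Finset.range p,
      ρ^[s] I = ρ^[t] I → s = t) :
    ∑ J ∈ orbitOf ρ I, J.card = ∑ t ∈ Finset.range p, ((ρ^[t] I).card) := by
  rw [orbit_eq_image ρ hp hp0, Finset.sum_image hinj]

lemma orbit_congr {I J : Finset (Fin m)} {k k' : ℕ} (h1 : ρ^[k] I = J) (h2 : ρ^[k'] J = I) :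
    orbitOf ρ I = orbitOf ρ J := by
  ext K
  simp only [orbitOf, Finset.mem_filter, Finset.mem_univ, true_and]
  constructor
  · rintro ⟨s, rfl⟩
    exact ⟨s + k', by rw [Function.iterate_add_apply, h2]⟩
  · rintro ⟨s, rfl⟩
    exact ⟨s + k, by rw [Function.iterate_add_apply, h1]⟩

lemma self_mem_orbit (I : Finset (Fin m)) : I ∈ orbitOf ρ I := by
  simp only [orbitOf, Finset.mem_filter, Finset.mem_univ, true_and]
  exact ⟨0, rfl⟩

end orbitlemmas

section iter
variable {a b : ℕ}

lemma lcm_pos (ha : 0 < a) (hb : 0 < b) : 0 < Nat.lcm a b :=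
  Nat.pos_of_ne_zero (Nat.lcm_ne_zero (by omega) (by omega))

lemma iter_special (ha : 0 < a) (hb : 0 < b) :
    ∀ t, t < Nat.lcm a b →
      (rhoRel (cLE [a,b]))^[t] (idl a b 0 0) = idl a b (t % a) (t % b) := by
  intro t
  induction t with
  | zero => intro _; simp [-List.sum_cons, Nat.zero_mod]
  | succ t ih =>
    intro hlt
    have ht : t < Nat.lcm a b := by omega
    rw [Function.iterate_succ_apply', ih ht]
    have hnot : ¬ (t % a + 1 = a ∧ t % b + 1 = b) := by
      rintro ⟨h1, h2⟩
      have da : a ∣ t + 1 := by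
        have : (t+1) % a = 0 := by rw [← Nat.mod_add_mod, h1, Nat.mod_self]
        omega
      have db : b ∣ t + 1 := by
        have : (t+1) % b = 0 := by rw [← Nat.mod_add_mod, h2, Nat.mod_self]
        omega
      have hd := Nat.lcm_dvd da db
      have := Nat.le_of_dvd (by omega) hd
      omega
    rw [rho_idl ha hb (Nat.mod_lt _ ha) (Nat.mod_lt _ hb) hnot]
    rw [Nat.mod_add_mod, Nat.mod_add_mod]

lemma rho_special_L (ha : 0 < a) (hb : 0 < b) :
    (rhoRel (cLE [a,b]))^[Nat.lcm a b] (idl a b 0 0) = Finset.univ := by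
  have hL : 0 < Nat.lcm a b := lcm_pos ha hb
  rw [show Nat.lcm a b = (Nat.lcm a b - 1) + 1 by omega, Function.iterate_succ_apply',
    iter_special ha hb _ (by omega), pred_mod ha hL (Nat.dvd_lcm_left a b),
    pred_mod hb hL (Nat.dvd_lcm_right a b), rho_idl_top ha hb]

lemma iter_empty_succ (ha : 0 < a) (hb : 0 < b) (t : ℕ) :
    (rhoRel (cLE [a,b]))^[t+1] (∅ : Finset (Fin ([a,b].sum)))
      = (rhoRel (cLE [a,b]))^[t] (idl a b 0 0) := by
  rw [Function.iterate_succ_apply, rho_empty ha hb]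

lemma iter_empty_top (ha : 0 < a) (hb : 0 < b) :
    (rhoRel (cLE [a,b]))^[Nat.lcm a b + 1] (∅ : Finset (Fin ([a,b].sum))) = Finset.univ := by
  rw [iter_empty_succ ha hb, rho_special_L ha hb]

lemma empty_period (ha : 0 < a) (hb : 0 < b) :
    (rhoRel (cLE [a,b]))^[Nat.lcm a b + 2] (∅ : Finset (Fin ([a,b].sum))) = ∅ := by
  have : Nat.lcm a b + 2 = 1 + (Nat.lcm a b + 1) := by omega
  rw [this, Function.iterate_add_apply, iter_empty_top ha hb]
  simpa using rho_univ ha hb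

lemma empty_ne_univ (ha : 0 < a) (hb : 0 < b) :
    (∅ : Finset (Fin ([a,b].sum))) ≠ Finset.univ := by
  intro h
  have h0 : (0:ℕ) < a + b := by omega
  have : elt a b 0 h0 ∈ (∅ : Finset (Fin ([a,b].sum))) := by rw [h]; simp [-List.sum_cons]
  simp [-List.sum_cons] at this

lemma inj_special (ha : 0 < a) (hb : 0 < b) :
    ∀ s ∈ Finset.range (Nat.lcm a b + 2), ∀ t ∈ Finset.range (Nat.lcm a b + 2),
      (rhoRel (cLE [a,b]))^[s] (∅ : Finset (Fin ([a,b].sum)))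
        = (rhoRel (cLE [a,b]))^[t] (∅ : Finset (Fin ([a,b].sum))) → s = t := by
  have hL : 0 < Nat.lcm a b := lcm_pos ha hb
  have hval : ∀ t, 0 < t → t ≤ Nat.lcm a b →
      (rhoRel (cLE [a,b]))^[t] (∅ : Finset (Fin ([a,b].sum)))
        = idl a b ((t-1) % a) ((t-1) % b) := by
    intro t ht1 ht2
    obtain ⟨u, rfl⟩ : ∃ u, t = u + 1 := ⟨t-1, by omega⟩
    rw [iter_empty_succ ha hb, iter_special ha hb u (by omega)]
    simp [-List.sum_cons]
  -- name the three kinds of values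
  intro s hs t ht heq
  simp only [Finset.mem_range] at hs ht
  rcases Nat.eq_zero_or_pos s with rfl | hs0 <;> rcases Nat.eq_zero_or_pos t with rfl | ht0
  · rfl
  · -- s = 0, t > 0
    exfalso
    simp only [Function.iterate_zero_apply] at heq
    rcases Nat.lt_or_ge t (Nat.lcm a b + 1) with h | h
    · rw [hval t ht0 (by omega)] at heq
      exact idl_ne_empty ha hb heq.symm
    · have : t = Nat.lcm a b + 1 := by omega
      rw [this, iter_empty_top ha hb] at heq
      exact empty_ne_univ ha hb heq
  · exfalso
    simp only [Function.iterate_zero_apply] at heq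
    rcases Nat.lt_or_ge s (Nat.lcm a b + 1) with h | h
    · rw [hval s hs0 (by omega)] at heq
      exact idl_ne_empty ha hb heq
    · have : s = Nat.lcm a b + 1 := by omega
      rw [this, iter_empty_top ha hb] at heq
      exact empty_ne_univ ha hb heq.symm
  · rcases Nat.lt_or_ge s (Nat.lcm a b + 1) with h1 | h1 <;>
      rcases Nat.lt_or_ge t (Nat.lcm a b + 1) with h2 | h2
    · rw [hval s hs0 (by omega), hval t ht0 (by omega)] at heq
      have := idl_inj hb (Nat.mod_lt _ ha) (Nat.mod_lt _ hb) (Nat.mod_lt _ ha)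
        (Nat.mod_lt _ hb) heq
      have hmod := mod_cancel_lcm ha hb this.1 this.2
      rw [Nat.mod_eq_of_lt (by omega), Nat.mod_eq_of_lt (by omega)] at hmod
      omega
    · exfalso
      have : t = Nat.lcm a b + 1 := by omega
      rw [this, iter_empty_top ha hb, hval s hs0 (by omega)] at heq
      exact idl_ne_univ hb (Nat.mod_lt _ ha) (Nat.mod_lt _ hb) heq
    · exfalso
      have : s = Nat.lcm a b + 1 := by omega
      rw [this, iter_empty_top ha hb, hval t ht0 (by omega)] at heq
      exact idl_ne_univ hb (Nat.mod_lt _ ha) (Nat.mod_lt _ hb) heq.symm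
    · omega

lemma iter_ns (ha : 0 < a) (hb : 0 < b) {c : ℕ} (hc0 : 0 < c) (hcd : c < Nat.gcd a b) :
    ∀ t, (rhoRel (cLE [a,b]))^[t] (idl a b c 0) = idl a b ((c + t) % a) (t % b) := by
  have hda : Nat.gcd a b ∣ a := Nat.gcd_dvd_left a b
  have hdb : Nat.gcd a b ∣ b := Nat.gcd_dvd_right a b
  have hdlea : Nat.gcd a b ≤ a := Nat.le_of_dvd ha hda
  intro t
  induction t with
  | zero =>
    simp only [Function.iterate_zero_apply, Nat.add_zero, Nat.zero_mod]
    rw [Nat.mod_eq_of_lt (by omega)]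
  | succ t ih =>
    rw [Function.iterate_succ_apply', ih]
    have hnot : ¬ ((c + t) % a + 1 = a ∧ t % b + 1 = b) := by
      rintro ⟨h1, h2⟩
      have da : a ∣ c + t + 1 := by
        have : (c + t + 1) % a = 0 := by rw [← Nat.mod_add_mod, h1, Nat.mod_self]
        omega
      have db : b ∣ t + 1 := by
        have : (t+1) % b = 0 := by rw [← Nat.mod_add_mod, h2, Nat.mod_self]
        omega
      have dda : Nat.gcd a b ∣ c + t + 1 := dvd_trans hda da
      have ddb : Nat.gcd a b ∣ t + 1 := dvd_trans hdb db
      have hsub : Nat.gcd a b ∣ c + t + 1 - (t + 1) := Nat.dvd_sub dda ddb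
      have heqc : c + t + 1 - (t + 1) = c := by omega
      rw [heqc] at hsub
      have := Nat.le_of_dvd hc0 hsub
      omega
    rw [rho_idl ha hb (Nat.mod_lt _ ha) (Nat.mod_lt _ hb) hnot]
    rw [Nat.mod_add_mod, Nat.mod_add_mod]
    congr 2

lemma ns_period (ha : 0 < a) (hb : 0 < b) {c : ℕ} (hc0 : 0 < c) (hcd : c < Nat.gcd a b) :
    (rhoRel (cLE [a,b]))^[Nat.lcm a b] (idl a b c 0) = idl a b c 0 := by
  rw [iter_ns ha hb hc0 hcd]
  obtain ⟨k, hk⟩ := Nat.dvd_lcm_left a b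
  obtain ⟨k', hk'⟩ := Nat.dvd_lcm_right a b
  have hdlea : Nat.gcd a b ≤ a := Nat.le_of_dvd ha (Nat.gcd_dvd_left a b)
  rw [show (Nat.lcm a b) % b = 0 from by rw [hk', Nat.mul_mod_right],
    show (c + Nat.lcm a b) % a = c from by
      rw [hk, Nat.add_mul_mod_self_left, Nat.mod_eq_of_lt (by omega)]]

lemma inj_ns (ha : 0 < a) (hb : 0 < b) {c : ℕ} (hc0 : 0 < c) (hcd : c < Nat.gcd a b) :
    ∀ s ∈ Finset.range (Nat.lcm a b), ∀ t ∈ Finset.range (Nat.lcm a b),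
      (rhoRel (cLE [a,b]))^[s] (idl a b c 0) = (rhoRel (cLE [a,b]))^[t] (idl a b c 0) →
        s = t := by
  intro s hs t ht heq
  simp only [Finset.mem_range] at hs ht
  rw [iter_ns ha hb hc0 hcd, iter_ns ha hb hc0 hcd] at heq
  have := idl_inj hb (Nat.mod_lt _ ha) (Nat.mod_lt _ hb) (Nat.mod_lt _ ha)
    (Nat.mod_lt _ hb) heq
  have h1 : s % a = t % a := Nat.ModEq.add_left_cancel' c this.1
  have hmod := mod_cancel_lcm ha hb h1 this.2
  rw [Nat.mod_eq_of_lt hs, Nat.mod_eq_of_lt ht] at hmod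
  exact hmod

end iter
end RT
namespace RT
open Finset

variable {a b : ℕ}

lemma orbit_empty_card (ha : 0 < a) (hb : 0 < b) :
    (orbitOf (rhoRel (cLE [a,b])) (∅ : Finset (Fin ([a,b].sum)))).card = Nat.lcm a b + 2 :=
  orbit_card _ (empty_period ha hb) (by omega) (inj_special ha hb)

lemma orbit_univ_eq (ha : 0 < a) (hb : 0 < b) :
    orbitOf (rhoRel (cLE [a,b])) (Finset.univ : Finset (Fin ([a,b].sum)))
      = orbitOf (rhoRel (cLE [a,b])) ∅ :=
  orbit_congr _ (k := 1) (k' := Nat.lcm a b + 1)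
    (by simpa using rho_univ ha hb) (iter_empty_top ha hb)

lemma special_orbit_eq (ha : 0 < a) (hb : 0 < b) {i j : ℕ} (hi : i < a) (hj : j < b)
    (hmod : i % Nat.gcd a b = j % Nat.gcd a b) :
    orbitOf (rhoRel (cLE [a,b])) (idl a b i j) = orbitOf (rhoRel (cLE [a,b])) ∅ := by
  have hL : 0 < Nat.lcm a b := lcm_pos ha hb
  obtain ⟨t, ht1, ht2⟩ := Nat.chineseRemainder' (n := a) (m := b) (a := i) (b := j) hmod
  set L := Nat.lcm a b with hLdef
  set s := t % L with hs
  have hsL : s < L := Nat.mod_lt _ hL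
  have hsa : s % a = i := by
    rw [hs, Nat.mod_mod_of_dvd t (Nat.dvd_lcm_left a b)]
    rw [show t % a = i % a from ht1, Nat.mod_eq_of_lt hi]
  have hsb : s % b = j := by
    rw [hs, Nat.mod_mod_of_dvd t (Nat.dvd_lcm_right a b)]
    rw [show t % b = j % b from ht2, Nat.mod_eq_of_lt hj]
  have h1 : (rhoRel (cLE [a,b]))^[s+1] (∅ : Finset (Fin ([a,b].sum))) = idl a b i j := by
    rw [iter_empty_succ ha hb, iter_special ha hb s hsL, hsa, hsb]
  have h2 : (rhoRel (cLE [a,b]))^[L+1-s] (idl a b i j) = ∅ := by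
    rw [← h1, ← Function.iterate_add_apply, show L+1-s + (s+1) = L + 2 by omega]
    exact empty_period ha hb
  exact orbit_congr _ h2 h1

lemma ns_orbit_card (ha : 0 < a) (hb : 0 < b) {c : ℕ} (hc0 : 0 < c) (hcd : c < Nat.gcd a b) :
    (orbitOf (rhoRel (cLE [a,b])) (idl a b c 0)).card = Nat.lcm a b :=
  orbit_card _ (ns_period ha hb hc0 hcd) (lcm_pos ha hb) (inj_ns ha hb hc0 hcd)

lemma ns_orbit_eq (ha : 0 < a) (hb : 0 < b) {i j : ℕ} (hi : i < a) (hj : j < b)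
    (hmod : i % Nat.gcd a b ≠ j % Nat.gcd a b) :
    ∃ c, 0 < c ∧ c < Nat.gcd a b ∧
      orbitOf (rhoRel (cLE [a,b])) (idl a b i j)
        = orbitOf (rhoRel (cLE [a,b])) (idl a b c 0) := by
  set d := Nat.gcd a b with hd
  have hd0 : 0 < d := Nat.gcd_pos_of_pos_left _ ha
  have hdlea : d ≤ a := Nat.le_of_dvd ha (Nat.gcd_dvd_left a b)
  have hL : 0 < Nat.lcm a b := lcm_pos ha hb
  set L := Nat.lcm a b with hLdef
  set i' := i % d with hi'
  set j' := j % d with hj'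
  have hi'd : i' < d := Nat.mod_lt _ hd0
  have hj'd : j' < d := Nat.mod_lt _ hd0
  set c := (d + i' - j') % d with hc
  have hcval : (i' < j' ∧ c = d + i' - j') ∨ (j' < i' ∧ c = i' - j') := by
    rcases Nat.lt_or_ge i' j' with h | h
    · left
      exact ⟨h, by rw [hc, Nat.mod_eq_of_lt (by omega)]⟩
    · right
      refine ⟨by omega, ?_⟩
      rw [hc, show d + i' - j' = (i' - j') + d by omega, Nat.add_mod_right,
        Nat.mod_eq_of_lt (by omega)]
  have hc0 : 0 < c := by rcases hcval with ⟨h, h2⟩ | ⟨h, h2⟩ <;> omega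
  have hcd : c < d := by rcases hcval with ⟨h, h2⟩ | ⟨h, h2⟩ <;> omega
  refine ⟨c, hc0, hcd, ?_⟩
  -- key congruence : (c + j) % d = i % d
  have hkey : (c + j) % d = i % d := by
    rw [Nat.add_mod c j d, ← hj', Nat.mod_eq_of_lt hcd, ← hi']
    rcases hcval with ⟨h, h2⟩ | ⟨h, h2⟩
    · rw [h2, show d + i' - j' + j' = i' + d by omega, Nat.add_mod_right,
        Nat.mod_eq_of_lt hi'd]
    · rw [h2, show i' - j' + j' = i' by omega, Nat.mod_eq_of_lt hi'd]
  -- CRT to find t with t ≡ i + a - c [MOD a], t ≡ j [MOD b]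
  have hcompat : (i + a - c) ≡ j [MOD Nat.gcd a b] := by
    apply Nat.ModEq.add_right_cancel' c
    show (i + a - c + c) % d = (j + c) % d
    rw [show i + a - c + c = i + a by omega]
    obtain ⟨q, hq⟩ := Nat.gcd_dvd_left a b
    rw [show (i + a) % d = i % d from by rw [hq]; exact Nat.add_mul_mod_self_left i d q]
    rw [← hkey, Nat.add_comm j c]
  obtain ⟨t, ht1, ht2⟩ := Nat.chineseRemainder' (n := a) (m := b) hcompat
  have hca : (c + t) % a = i := by
    rw [Nat.add_mod c t a, show t % a = (i + a - c) % a from ht1, ← Nat.add_mod,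
      show c + (i + a - c) = i + a by omega, Nat.add_mod_right, Nat.mod_eq_of_lt hi]
  have hcb : t % b = j := by
    rw [show t % b = j % b from ht2, Nat.mod_eq_of_lt hj]
  have h1 : (rhoRel (cLE [a,b]))^[t] (idl a b c 0) = idl a b i j := by
    rw [iter_ns ha hb hc0 hcd, hca, hcb]
  have h2 : (rhoRel (cLE [a,b]))^[L - t % L] (idl a b i j) = idl a b c 0 := by
    rw [← h1, ← Function.iterate_add_apply]
    have hmd := Nat.mod_add_div t L
    have hml : t % L < L := Nat.mod_lt _ hL
    rw [show L - t % L + t = L * (t / L + 1) from by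
      have hexp : L * (t / L + 1) = L * (t / L) + L := by ring
      omega]
    have hper : (rhoRel (cLE [a,b]))^[L] (idl a b c 0) = idl a b c 0 :=
      ns_period ha hb hc0 hcd
    rw [iterate_period _ hper, Nat.mul_mod_right]
    simp [-List.sum_cons]
  exact orbit_congr _ h2 h1

lemma ns_orbit_distinct (ha : 0 < a) (hb : 0 < b) {c c' : ℕ}
    (hc0 : 0 < c) (hcd : c < Nat.gcd a b) (hc0' : 0 < c') (hcd' : c' < Nat.gcd a b)
    (h : orbitOf (rhoRel (cLE [a,b])) (idl a b c 0)
      = orbitOf (rhoRel (cLE [a,b])) (idl a b c' 0)) : c = c' := by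
  have hd0 : 0 < Nat.gcd a b := Nat.gcd_pos_of_pos_left _ ha
  have hdlea : Nat.gcd a b ≤ a := Nat.le_of_dvd ha (Nat.gcd_dvd_left a b)
  have hmem : idl a b c' 0 ∈ orbitOf (rhoRel (cLE [a,b])) (idl a b c 0) := by
    rw [h]; exact self_mem_orbit _ _
  simp only [orbitOf, Finset.mem_filter, Finset.mem_univ, true_and] at hmem
  obtain ⟨k, hk⟩ := hmem
  rw [iter_ns ha hb hc0 hcd] at hk
  have := idl_inj hb (Nat.mod_lt _ ha) (Nat.mod_lt _ hb) (by omega) hb hk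
  have hkb : k % b = 0 := this.2
  have hbk : b ∣ k := by omega
  have hdk : Nat.gcd a b ∣ k := dvd_trans (Nat.gcd_dvd_right a b) hbk
  obtain ⟨q, hq⟩ := hdk
  obtain ⟨w, hw⟩ := Nat.gcd_dvd_left a b
  have h1 : (c + k) % a % Nat.gcd a b = (c + k) % Nat.gcd a b :=
    Nat.mod_mod_of_dvd _ (Nat.gcd_dvd_left a b)
  have h2 : (c + k) % Nat.gcd a b = c % Nat.gcd a b := by
    rw [hq, Nat.add_mul_mod_self_left]
  have h3 : c % Nat.gcd a b = c := Nat.mod_eq_of_lt hcd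
  have h4 : c' % Nat.gcd a b = c' := Nat.mod_eq_of_lt hcd'
  have : c' % Nat.gcd a b = (c + k) % a % Nat.gcd a b := by rw [← this.1]
  omega

lemma orbit_classify (ha : 0 < a) (hb : 0 < b) {I : Finset (Fin ([a,b].sum))}
    (hI : IsCIdeal [a,b] I) :
    orbitOf (rhoRel (cLE [a,b])) I = orbitOf (rhoRel (cLE [a,b])) ∅ ∨
    ∃ c, 0 < c ∧ c < Nat.gcd a b ∧
      orbitOf (rhoRel (cLE [a,b])) I = orbitOf (rhoRel (cLE [a,b])) (idl a b c 0) := by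
  rcases classify ha hb hI with rfl | rfl | ⟨i, j, hi, hj, rfl⟩
  · left; rfl
  · left; exact orbit_univ_eq ha hb
  · by_cases hmod : i % Nat.gcd a b = j % Nat.gcd a b
    · left; exact special_orbit_eq ha hb hi hj hmod
    · right; exact ns_orbit_eq ha hb hi hj hmod

lemma orbit_empty_sum (ha : 0 < a) (hb : 0 < b) :
    2 * ∑ J ∈ orbitOf (rhoRel (cLE [a,b])) (∅ : Finset (Fin ([a,b].sum))), J.card
      = (Nat.lcm a b + 2) * (a + b) := by
  set L := Nat.lcm a b with hL
  have hL0 : 0 < L := lcm_pos ha hb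
  rw [orbit_sum _ (empty_period ha hb) (by omega) (inj_special ha hb)]
  have hstep : ∀ t ∈ Finset.range L,
      ((rhoRel (cLE [a,b]))^[t+1] (∅ : Finset (Fin ([a,b].sum)))).card
        = t % a + 1 + t % b := by
    intro t ht
    simp only [Finset.mem_range] at ht
    rw [iter_empty_succ ha hb, iter_special ha hb t ht,
      card_idl ha hb (Nat.mod_lt _ ha) (Nat.mod_lt _ hb)]
  rw [Finset.sum_range_succ, Finset.sum_range_succ']
  rw [iter_empty_top ha hb]
  have hcu : (Finset.univ : Finset (Fin ([a,b].sum))).card = a + b := by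
    rw [Finset.card_univ, Fintype.card_fin, hsum]
  rw [hcu]
  simp only [Function.iterate_zero_apply, Finset.card_empty]
  rw [Finset.sum_congr rfl hstep]
  have hsplit : ∑ t ∈ Finset.range L, (t % a + 1 + t % b)
      = (∑ t ∈ Finset.range L, t % a) + (∑ t ∈ Finset.range L, t % b) + L := by
    rw [Finset.sum_add_distrib, Finset.sum_add_distrib, Finset.sum_const, Finset.card_range]
    simp [Nat.mul_one]
    try omega
  rw [hsplit]
  have ha2 : 2 * ∑ t ∈ Finset.range L, t % a = L * (a - 1) := by
    have := twice_sum_mod ha (Nat.dvd_lcm_left a b) 0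
    simpa using this
  have hb2 : 2 * ∑ t ∈ Finset.range L, t % b = L * (b - 1) := by
    have := twice_sum_mod hb (Nat.dvd_lcm_right a b) 0
    simpa using this
  have hfin : L * (a-1) + L * (b-1) + 2 * L = L * (a + b) := by
    have h9 : (a-1) + (b-1) + 2 = a + b := by omega
    calc L * (a-1) + L * (b-1) + 2*L = L * ((a-1) + (b-1) + 2) := by ring
      _ = L * (a+b) := by rw [h9]
  have expand : 2 * ((∑ t ∈ Finset.range L, t % a) + (∑ t ∈ Finset.range L, t % b) + L + 0 + (a+b))
      = 2 * (∑ t ∈ Finset.range L, t % a) + 2 * (∑ t ∈ Finset.range L, t % b) + 2*L + 2*(a+b) := by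
    ring
  rw [expand, ha2, hb2]
  calc L * (a-1) + L * (b-1) + 2*L + 2*(a+b) = L * (a+b) + 2 * (a+b) := by rw [← hfin]
    _ = (L + 2) * (a + b) := by ring

lemma ns_orbit_sum (ha : 0 < a) (hb : 0 < b) {c : ℕ} (hc0 : 0 < c) (hcd : c < Nat.gcd a b) :
    2 * ∑ J ∈ orbitOf (rhoRel (cLE [a,b])) (idl a b c 0), J.card
      = Nat.lcm a b * (a + b) := by
  set L := Nat.lcm a b with hL
  have hL0 : 0 < L := lcm_pos ha hb
  rw [orbit_sum _ (ns_period ha hb hc0 hcd) hL0 (inj_ns ha hb hc0 hcd)]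
  have hstep : ∀ t ∈ Finset.range L,
      ((rhoRel (cLE [a,b]))^[t] (idl a b c 0)).card = (c + t) % a + 1 + t % b := by
    intro t _
    rw [iter_ns ha hb hc0 hcd, card_idl ha hb (Nat.mod_lt _ ha) (Nat.mod_lt _ hb)]
  rw [Finset.sum_congr rfl hstep]
  have hsplit : ∑ t ∈ Finset.range L, ((c + t) % a + 1 + t % b)
      = (∑ t ∈ Finset.range L, (c + t) % a) + (∑ t ∈ Finset.range L, t % b) + L := by
    rw [Finset.sum_add_distrib, Finset.sum_add_distrib, Finset.sum_const, Finset.card_range]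
    simp [Nat.mul_one]
    try omega
  rw [hsplit]
  have ha2 : 2 * ∑ t ∈ Finset.range L, (c + t) % a = L * (a - 1) :=
    twice_sum_mod ha (Nat.dvd_lcm_left a b) c
  have hb2 : 2 * ∑ t ∈ Finset.range L, t % b = L * (b - 1) := by
    have := twice_sum_mod hb (Nat.dvd_lcm_right a b) 0
    simpa using this
  have h9 : (a-1) + (b-1) + 2 = a + b := by omega
  calc 2 * ((∑ t ∈ Finset.range L, (c+t) % a) + (∑ t ∈ Finset.range L, t % b) + L)
      = 2 * (∑ t ∈ Finset.range L, (c+t) % a) + 2 * (∑ t ∈ Finset.range L, t % b) + 2*L := by ring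
    _ = L * (a-1) + L * (b-1) + 2*L := by rw [ha2, hb2]
    _ = L * ((a-1) + (b-1) + 2) := by ring
    _ = L * (a+b) := by rw [h9]

end RT

/-- rowmotion on the lower ideals of `F̄((a,b))` has exactly one orbit
of size `lcm(a,b) + 2` and exactly `gcd(a,b) − 1` orbits of size `lcm(a,b)`, and no
other orbits; moreover the statistic `I ↦ |I|` is `(a+b)/2`-mesic. -/
theorem rowmotion_two_parts (a b : ℕ) (ha : 0 < a) (hb : 0 < b) :
    (∀ I : Finset (Fin ([a, b].sum)), IsCIdeal [a, b] I →
      (orbitOf (rhoRel (cLE [a, b])) I).card = Nat.lcm a b + 2 ∨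
      (orbitOf (rhoRel (cLE [a, b])) I).card = Nat.lcm a b) ∧
    Nat.card {O : Finset (Finset (Fin ([a, b].sum))) //
      (∃ I, IsCIdeal [a, b] I ∧ O = orbitOf (rhoRel (cLE [a, b])) I) ∧
        O.card = Nat.lcm a b + 2} = 1 ∧
    Nat.card {O : Finset (Finset (Fin ([a, b].sum))) //
      (∃ I, IsCIdeal [a, b] I ∧ O = orbitOf (rhoRel (cLE [a, b])) I) ∧
        O.card = Nat.lcm a b} = Nat.gcd a b - 1 ∧
    ∀ I : Finset (Fin ([a, b].sum)), IsCIdeal [a, b] I →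
      2 * (∑ J ∈ orbitOf (rhoRel (cLE [a, b])) I, J.card) =
        (orbitOf (rhoRel (cLE [a, b])) I).card * (a + b) := by
  have hd0 : 0 < Nat.gcd a b := Nat.gcd_pos_of_pos_left _ ha
  have hdlea : Nat.gcd a b ≤ a := Nat.le_of_dvd ha (Nat.gcd_dvd_left a b)
  have hL0 : 0 < Nat.lcm a b := RT.lcm_pos ha hb
  refine ⟨?_, ?_, ?_, ?_⟩
  · intro I hI
    rcases RT.orbit_classify ha hb hI with h | ⟨c, hc0, hcd, h⟩
    · left; rw [h]; exact RT.orbit_empty_card ha hb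
    · right; rw [h]; exact RT.ns_orbit_card ha hb hc0 hcd
  · have hu : ∀ X : {O : Finset (Finset (Fin ([a, b].sum))) //
        (∃ I, IsCIdeal [a, b] I ∧ O = orbitOf (rhoRel (cLE [a, b])) I) ∧
          O.card = Nat.lcm a b + 2},
        X.val = orbitOf (rhoRel (cLE [a, b])) ∅ := by
      rintro ⟨O, ⟨I, hI, rfl⟩, hcard⟩
      rcases RT.orbit_classify ha hb hI with h | ⟨c, hc0, hcd, h⟩
      · exact h
      · exfalso
        rw [h, RT.ns_orbit_card ha hb hc0 hcd] at hcard
        omega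
    haveI hne : Nonempty {O : Finset (Finset (Fin ([a, b].sum))) //
        (∃ I, IsCIdeal [a, b] I ∧ O = orbitOf (rhoRel (cLE [a, b])) I) ∧
          O.card = Nat.lcm a b + 2} :=
      ⟨⟨orbitOf (rhoRel (cLE [a, b])) ∅, ⟨∅, RT.isCIdeal_empty a b, rfl⟩,
        RT.orbit_empty_card ha hb⟩⟩
    haveI hss : Subsingleton {O : Finset (Finset (Fin ([a, b].sum))) //
        (∃ I, IsCIdeal [a, b] I ∧ O = orbitOf (rhoRel (cLE [a, b])) I) ∧
          O.card = Nat.lcm a b + 2} :=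
      ⟨fun X Y => Subtype.ext ((hu X).trans (hu Y).symm)⟩
    exact Nat.card_unique
  · set T := {O : Finset (Finset (Fin ([a, b].sum))) //
        (∃ I, IsCIdeal [a, b] I ∧ O = orbitOf (rhoRel (cLE [a, b])) I) ∧
          O.card = Nat.lcm a b} with hT
    have hf : ∀ c : {c : ℕ // c ∈ Finset.Ioo 0 (Nat.gcd a b)},
        (∃ I, IsCIdeal [a, b] I ∧
          orbitOf (rhoRel (cLE [a, b])) (RT.idl a b c.val 0) = orbitOf (rhoRel (cLE [a, b])) I) ∧
        (orbitOf (rhoRel (cLE [a, b])) (RT.idl a b c.val 0)).card = Nat.lcm a b := by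
      intro c
      obtain ⟨hc0, hcd⟩ := Finset.mem_Ioo.mp c.2
      exact ⟨⟨RT.idl a b c.val 0, RT.isCIdeal_idl ha hb (by omega) hb, rfl⟩,
        RT.ns_orbit_card ha hb hc0 hcd⟩
    let f : {c : ℕ // c ∈ Finset.Ioo 0 (Nat.gcd a b)} → T := fun c =>
      ⟨orbitOf (rhoRel (cLE [a, b])) (RT.idl a b c.val 0),
        ⟨RT.idl a b c.val 0,
          RT.isCIdeal_idl ha hb (by
            obtain ⟨hc0, hcd⟩ := Finset.mem_Ioo.mp c.2
            omega) hb, rfl⟩,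
        (by
          obtain ⟨hc0, hcd⟩ := Finset.mem_Ioo.mp c.2
          exact RT.ns_orbit_card ha hb hc0 hcd)⟩
    have hbij : Function.Bijective f := by
      constructor
      · intro c c' h
        obtain ⟨hc0, hcd⟩ := Finset.mem_Ioo.mp c.2
        obtain ⟨hc0', hcd'⟩ := Finset.mem_Ioo.mp c'.2
        have := congrArg Subtype.val h
        simp only [f] at this
        exact Subtype.ext (RT.ns_orbit_distinct ha hb hc0 hcd hc0' hcd' this)
      · rintro ⟨O, ⟨I, hI, rfl⟩, hcard⟩
        rcases RT.orbit_classify ha hb hI with h | ⟨c, hc0, hcd, h⟩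
        · exfalso
          rw [h, RT.orbit_empty_card ha hb] at hcard
          omega
        · exact ⟨⟨c, Finset.mem_Ioo.mpr ⟨hc0, hcd⟩⟩, Subtype.ext h.symm⟩
    have := Nat.card_eq_of_bijective f hbij
    rw [← this, Nat.card_eq_fintype_card, Fintype.card_coe, Nat.card_Ioo]; omega
  · intro I hI
    rcases RT.orbit_classify ha hb hI with h | ⟨c, hc0, hcd, h⟩
    · rw [h, RT.orbit_empty_sum ha hb, RT.orbit_empty_card ha hb]
    · rw [h, RT.ns_orbit_sum ha hb hc0 hcd, RT.ns_orbit_card ha hb hc0 hcd]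
end

section
/- Let α be a composition with an even number of parts, one of whose parts equals t ≥ 3, and let α' be the composition obtained from α by replacing that part by the three consecutive parts t−2, 1, 1. Then for every k, the number of lower ideals of size k of the circular fence poset F̄(α') is greater than or equal to the number of lower ideals of size k of F̄(α); equivalently, R̄(α';q) − R̄(α;q) has nonnegative integer coefficients. -/
attribute [local instance] Classical.propDecidable

section AuxSplitMono

private lemma countP_range_add' (a b : ℕ) (P : ℕ → Bool) :
    (List.range (a + b)).countP P
      = (List.range a).countP P + (List.range b).countP (fun m => P (a + m)) := by
  rw [List.range_add, List.countP_append, List.countP_map]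
  rfl

private lemma sum_take_le' (A : List ℕ) (j : ℕ) : (A.take j).sum ≤ A.sum := by
  conv_rhs => rw [← List.take_append_drop j A]
  rw [List.sum_append]
  omega

private lemma segIdx_append3 (A M B : List ℕ) (e : ℕ) :
    segIdx (A ++ M ++ B) e =
      (List.range A.length).countP (fun j => decide ((A.take (j + 1)).sum ≤ e))
      + ((List.range M.length).countP (fun m => decide (A.sum + (M.take (m + 1)).sum ≤ e))
        + (List.range B.length).countP
            (fun m => decide (A.sum + M.sum + (B.take (m + 1)).sum ≤ e))) := by
  unfold segIdx
  rw [← List.countP_eq_length_filter]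
  have hl : (A ++ M ++ B).length = A.length + (M.length + B.length) := by
    simp [Nat.add_assoc]
  rw [hl, countP_range_add', countP_range_add']
  congr 1
  · apply List.countP_congr
    intro j hj
    rw [List.mem_range] at hj
    simp only [decide_eq_true_eq]
    rw [List.append_assoc, List.take_append_of_le_length (by omega)]
  congr 1
  · apply List.countP_congr
    intro m hm
    rw [List.mem_range] at hm
    have htk : (A ++ M ++ B).take (A.length + m + 1) = A ++ M.take (m + 1) := by
      rw [List.append_assoc, Nat.add_assoc, List.take_append,
        List.take_append_of_le_length (by omega), List.take_of_length_le (by omega),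
        Nat.add_sub_cancel_left]
    simp only [decide_eq_true_eq, htk, List.sum_append]
  · apply List.countP_congr
    intro m hm
    rw [List.mem_range] at hm
    have hidx : A.length + (M.length + m) + 1 = (A ++ M).length + (m + 1) := by
      rw [List.length_append]; omega
    have htk : (A ++ M ++ B).take (A.length + (M.length + m) + 1)
        = (A ++ M) ++ B.take (m + 1) := by
      rw [hidx, List.take_append, List.take_of_length_le (by omega), Nat.add_sub_cancel_left]
    simp only [decide_eq_true_eq, htk, List.sum_append]

private lemma segIdx_middle (A B : List ℕ) (c e : ℕ) (h1 : A.sum ≤ e) (h2 : e < A.sum + c) :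
    segIdx (A ++ [c] ++ B) e = A.length := by
  rw [segIdx_append3]
  have e1 : (List.range A.length).countP (fun j => decide ((A.take (j + 1)).sum ≤ e))
      = A.length := by
    have hall : ∀ a ∈ List.range A.length,
        (fun j => decide ((A.take (j + 1)).sum ≤ e)) a = true := by
      intro a _
      simp only [decide_eq_true_eq]
      exact le_trans (sum_take_le' A (a + 1)) h1
    rw [List.countP_eq_length.mpr hall, List.length_range]
  have e2 : (List.range (List.length [c])).countP
      (fun m => decide (A.sum + (List.take (m + 1) [c]).sum ≤ e)) = 0 := by
    apply List.countP_eq_zero.mpr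
    intro m hm
    simp only [List.length_singleton, List.mem_range, Nat.lt_one_iff] at hm
    subst hm
    simp only [decide_eq_true_eq]
    simp only [List.take, List.sum_cons, List.sum_nil]
    omega
  have e3 : (List.range B.length).countP
      (fun m => decide (A.sum + List.sum [c] + (B.take (m + 1)).sum ≤ e)) = 0 := by
    apply List.countP_eq_zero.mpr
    intro m _
    simp only [decide_eq_true_eq, List.sum_cons, List.sum_nil]
    intro h; have := @of_decide_eq_true _ _ h
    omega
  rw [e1, e2, e3]
  omega

private lemma segIdx_split (A B : List ℕ) (t3 e : ℕ) :
    segIdx (A ++ [t3 + 1, 1, 1] ++ B) e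
      = segIdx (A ++ [t3 + 3] ++ B) e + (if A.sum + t3 + 1 ≤ e then 1 else 0)
        + (if A.sum + t3 + 2 ≤ e then 1 else 0) := by
  rw [segIdx_append3, segIdx_append3]
  have m4 : (List.range B.length).countP
        (fun m => decide (A.sum + List.sum [t3 + 1, 1, 1] + (B.take (m + 1)).sum ≤ e))
      = (List.range B.length).countP
        (fun m => decide (A.sum + List.sum [t3 + 3] + (B.take (m + 1)).sum ≤ e)) := by
    apply List.countP_congr
    intro m _
    simp only [decide_eq_true_eq, List.sum_cons, List.sum_nil]
    constructor <;> intro h <;> have := @of_decide_eq_true _ _ h <;>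
      exact @decide_eq_true _ _ (by omega)
  rw [m4]
  have m1 : (List.range (List.length [t3 + 3])).countP
      (fun m => decide (A.sum + (List.take (m + 1) [t3 + 3]).sum ≤ e))
      = (if A.sum + t3 + 3 ≤ e then 1 else 0) := by
    simp only [List.length_singleton, List.range_succ, List.range_zero, List.nil_append,
      List.countP_cons, List.countP_nil, decide_eq_true_eq]
    simp only [List.take, List.sum_cons, List.sum_nil, Nat.add_zero, Nat.zero_add]
    by_cases hc : A.sum + t3 + 3 ≤ e <;>
      simp [hc, show (A.sum + (t3 + 3) ≤ e) ↔ (A.sum + t3 + 3 ≤ e) from by omega]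
  have m3 : (List.range (List.length [t3 + 1, 1, 1])).countP
      (fun m => decide (A.sum + (List.take (m + 1) [t3 + 1, 1, 1]).sum ≤ e))
      = (if A.sum + t3 + 1 ≤ e then 1 else 0) + (if A.sum + t3 + 2 ≤ e then 1 else 0)
        + (if A.sum + t3 + 3 ≤ e then 1 else 0) := by
    have hr3 : List.range (List.length [t3 + 1, 1, 1]) = [0, 1, 2] := by rfl
    rw [hr3]
    simp only [List.countP_cons, List.countP_nil, decide_eq_true_eq]
    norm_num
    split_ifs <;> omega
  rw [m1, m3]
  split_ifs <;> omega

end AuxSplitMono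
section AuxSplitMono2

private lemma finValMk {n a : ℕ} (h : a < n) : (⟨a, h⟩ : Fin n).val = a := rfl

private lemma mod_succ_eq {a n : ℕ} (h : a < n) :
    (a + 1) % n = if a + 1 = n then 0 else a + 1 := by
  split
  · next he => rw [he, Nat.mod_self]
  · next he => exact Nat.mod_eq_of_lt (by omega)

private lemma isCIdeal_iff_step (γ : List ℕ) (I : Finset (Fin γ.sum)) :
    IsCIdeal γ I ↔ ∀ x y, cStep γ x y → y ∈ I → x ∈ I := by
  constructor
  · intro h x y hxy
    exact h x y (Relation.ReflTransGen.single hxy)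
  · intro h x y hxy
    induction hxy with
    | refl => exact id
    | tail _ hzy ih => exact fun hy => ih (h _ _ hzy hy)

private lemma cRank_eq_step (γ : List ℕ) (k : ℕ) :
    cRank γ k = Nat.card {I : Finset (Fin γ.sum) //
      (∀ x y, cStep γ x y → y ∈ I → x ∈ I) ∧ I.card = k} :=
  Nat.card_congr (Equiv.subtypeEquivRight fun I => and_congr_left' (isCIdeal_iff_step γ I))

private lemma cRank_cast (γ : List ℕ) (n : ℕ) (h : γ.sum = n) (k : ℕ) :
    cRank γ k = Nat.card {I : Finset (Fin n) //
      (∀ x y : Fin n, cStep γ (Fin.cast h.symm x) (Fin.cast h.symm y) → y ∈ I → x ∈ I)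
        ∧ I.card = k} := by
  subst h
  exact cRank_eq_step γ k

private noncomputable def flipSet {n : ℕ} (u v : Fin n) (I : Finset (Fin n)) : Finset (Fin n) :=
  if u ∈ I ∧ v ∉ I then insert v (I.erase u) else I

private lemma flip_le {n : ℕ} (r r' : Fin n → Fin n → Prop) (u v : Fin n) (huv : u ≠ v)
    (h0 : r u v)
    (h1 : ∀ x y, r' x y ↔ (r x y ∧ ¬(x = u ∧ y = v)) ∨ (x = v ∧ y = u))
    (h2 : ∀ x, r x v → x = u)
    (h3 : ∀ y, r u y → y = v) (k : ℕ) :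
    Nat.card {I : Finset (Fin n) // (∀ x y, r x y → y ∈ I → x ∈ I) ∧ I.card = k}
      ≤ Nat.card {I : Finset (Fin n) // (∀ x y, r' x y → y ∈ I → x ∈ I) ∧ I.card = k} := by
  have hcard : ∀ I : Finset (Fin n), (flipSet u v I).card = I.card := by
    intro I
    by_cases hb : u ∈ I ∧ v ∉ I
    · rw [flipSet, if_pos hb,
        Finset.card_insert_of_notMem (fun hv => hb.2 (Finset.mem_of_mem_erase hv)),
        Finset.card_erase_of_mem hb.1]
      have : 0 < I.card := Finset.card_pos.mpr ⟨u, hb.1⟩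
      omega
    · rw [flipSet, if_neg hb]
  have hideal : ∀ I : Finset (Fin n), (∀ x y, r x y → y ∈ I → x ∈ I) →
      ∀ x y, r' x y → y ∈ flipSet u v I → x ∈ flipSet u v I := by
    intro I hI x y hr' hy
    by_cases hb : u ∈ I ∧ v ∉ I
    · rw [flipSet, if_pos hb] at hy ⊢
      rcases (h1 x y).mp hr' with ⟨hr, hne⟩ | ⟨hx, hy'⟩
      · rcases Finset.mem_insert.mp hy with h | h
        · exact absurd ⟨h2 x (by rw [h] at hr; exact hr), h⟩ hne
        · have hyI : y ∈ I := Finset.mem_of_mem_erase h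
          have hyu : y ≠ u := Finset.ne_of_mem_erase h
          have hyv : y ≠ v := fun hyv => hb.2 (hyv ▸ hyI)
          have hxI : x ∈ I := hI x y hr hyI
          have hxu : x ≠ u := fun hxu => hyv (h3 y (by rw [hxu] at hr; exact hr))
          exact Finset.mem_insert_of_mem (Finset.mem_erase.mpr ⟨hxu, hxI⟩)
      · exfalso
        rw [hy'] at hy
        rcases Finset.mem_insert.mp hy with h | h
        · exact huv h
        · exact Finset.notMem_erase u I h
    · rw [flipSet, if_neg hb] at hy ⊢
      rcases (h1 x y).mp hr' with ⟨hr, _⟩ | ⟨hx, hy'⟩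
      · exact hI x y hr hy
      · have hvI : v ∈ I := by
          by_contra hvn
          exact hb ⟨hy' ▸ hy, hvn⟩
        rw [hx]; exact hvI
  have hinj : ∀ I J : Finset (Fin n), (∀ x y, r x y → y ∈ I → x ∈ I) →
      (∀ x y, r x y → y ∈ J → x ∈ J) → flipSet u v I = flipSet u v J → I = J := by
    intro I J hI hJ heq
    by_cases hbI : u ∈ I ∧ v ∉ I <;> by_cases hbJ : u ∈ J ∧ v ∉ J
    · rw [flipSet, if_pos hbI, flipSet, if_pos hbJ] at heq
      have hv1 : v ∉ I.erase u := fun hv => hbI.2 (Finset.mem_of_mem_erase hv)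
      have hv2 : v ∉ J.erase u := fun hv => hbJ.2 (Finset.mem_of_mem_erase hv)
      have h5 : I.erase u = J.erase u := by
        rw [← Finset.erase_insert hv1, ← Finset.erase_insert hv2, heq]
      calc I = insert u (I.erase u) := (Finset.insert_erase hbI.1).symm
        _ = insert u (J.erase u) := by rw [h5]
        _ = J := Finset.insert_erase hbJ.1
    · exfalso
      rw [flipSet, if_pos hbI, flipSet, if_neg hbJ] at heq
      have hvJ : v ∈ J := by rw [← heq]; exact Finset.mem_insert_self v (I.erase u)
      have huJ : u ∈ J := hJ u v h0 hvJ
      rw [← heq] at huJ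
      rcases Finset.mem_insert.mp huJ with h | h
      · exact huv h
      · exact Finset.notMem_erase u I h
    · exfalso
      rw [flipSet, if_neg hbI, flipSet, if_pos hbJ] at heq
      have hvI : v ∈ I := by rw [heq]; exact Finset.mem_insert_self v (J.erase u)
      have huI : u ∈ I := hI u v h0 hvI
      have hmem : u ∈ insert v (J.erase u) := by rw [← heq]; exact huI
      rcases Finset.mem_insert.mp hmem with h | h
      · exact huv h
      · exact Finset.notMem_erase u J h
    · rw [flipSet, if_neg hbI, flipSet, if_neg hbJ] at heq
      exact heq
  let f : {I : Finset (Fin n) // (∀ x y, r x y → y ∈ I → x ∈ I) ∧ I.card = k}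
      → {I : Finset (Fin n) // (∀ x y, r' x y → y ∈ I → x ∈ I) ∧ I.card = k} :=
    fun I => ⟨flipSet u v I.1, hideal I.1 I.2.1, by rw [hcard]; exact I.2.2⟩
  have hf : Function.Injective f := by
    intro I J h
    apply Subtype.ext
    exact hinj I.1 J.1 I.2.1 J.2.1 (congrArg Subtype.val h)
  exact Nat.card_le_card_of_injective f hf

end AuxSplitMono2
/-- if `α'` is obtained from `α` (a composition with an even number of
parts) by replacing a part `t ≥ 3` by the three consecutive parts `t−2, 1, 1`, then
for every `k` the number of size-`k` lower ideals of `F̄(α')` is at least the number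
of size-`k` lower ideals of `F̄(α)`, i.e. `R̄(α';q) − R̄(α;q)` has nonnegative
coefficients. -/
theorem circular_rank_split_part_mono (α : List ℕ) (hα : IsComposition α)
    (heven : Even α.length) (i t : ℕ) (hi : i < α.length) (ht : α.getD i 0 = t)
    (h3 : 3 ≤ t) :
    ∀ k, cRank α k ≤ cRank (α.take i ++ [t - 2, 1, 1] ++ α.drop (i + 1)) k := by
  obtain ⟨t3, rfl⟩ : ∃ t3, t = t3 + 3 := ⟨t - 3, by omega⟩
  intro k
  have hgi : α[i] = t3 + 3 := by rw [← List.getD_eq_getElem α 0 hi]; exact ht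
  have hsplit : α = α.take i ++ [t3 + 3] ++ α.drop (i + 1) := by
    conv_lhs => rw [← List.take_append_drop i α, List.drop_eq_getElem_cons hi, hgi]
    rw [List.append_assoc]
    rfl
  have h2' : t3 + 3 - 2 = t3 + 1 := by omega
  rw [h2']
  set A := α.take i with hA
  set B := α.drop (i + 1) with hB
  rw [hsplit]
  -- notation
  have hn : (A ++ [t3 + 3] ++ B).sum = A.sum + (t3 + 3) + B.sum := by
    simp only [List.sum_append, List.sum_cons, List.sum_nil]
    omega
  have hNbig : A.sum + t3 + 3 ≤ (A ++ [t3 + 3] ++ B).sum := by omega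
  have hsum : (A ++ [t3 + 1, 1, 1] ++ B).sum = (A ++ [t3 + 3] ++ B).sum := by
    simp only [List.sum_append, List.sum_cons, List.sum_nil]
    omega
  have hseg := segIdx_split A B t3
  have hF1 : ∀ e, e ≠ A.sum + t3 + 1 →
      (upEdge (A ++ [t3 + 1, 1, 1] ++ B) e ↔ upEdge (A ++ [t3 + 3] ++ B) e) := by
    intro e he
    unfold upEdge
    rw [hseg e]
    by_cases hc : A.sum + t3 + 1 ≤ e
    · rw [if_pos hc, if_pos (by omega)]
      simp [Nat.even_add_one]
    · rw [if_neg hc, if_neg (by omega)]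
      simp
  have hF2 : upEdge (A ++ [t3 + 1, 1, 1] ++ B) (A.sum + t3 + 1)
      ↔ ¬ upEdge (A ++ [t3 + 3] ++ B) (A.sum + t3 + 1) := by
    unfold upEdge
    rw [hseg, if_pos le_rfl, if_neg (by omega)]
    simp [Nat.even_add_one]
  have hmid : ∀ e, A.sum ≤ e → e < A.sum + (t3 + 3) →
      (upEdge (A ++ [t3 + 3] ++ B) e ↔ Even A.length) := by
    intro e he1 he2
    unfold upEdge
    rw [segIdx_middle A B (t3 + 3) e he1 he2]
  rw [cRank_eq_step, cRank_cast (A ++ [t3 + 1, 1, 1] ++ B) ((A ++ [t3 + 3] ++ B).sum) hsum k]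
  by_cases hev : Even A.length
  · -- the flipped edge goes up in α: u = s+t3+1, v = s+t3+2
    have hupm : ∀ e, A.sum ≤ e → e < A.sum + (t3 + 3) → upEdge (A ++ [t3 + 3] ++ B) e :=
      fun e a b => (hmid e a b).mpr hev
    have hu0 : upEdge (A ++ [t3 + 3] ++ B) (A.sum + t3) := hupm _ (by omega) (by omega)
    have hu1 : upEdge (A ++ [t3 + 3] ++ B) (A.sum + t3 + 1) := hupm _ (by omega) (by omega)
    have hu2 : upEdge (A ++ [t3 + 3] ++ B) (A.sum + t3 + 2) := hupm _ (by omega) (by omega)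
    refine flip_le _ _ ⟨A.sum + t3 + 1, by omega⟩ ⟨A.sum + t3 + 2, by omega⟩
      (Fin.ne_of_val_ne (by simp only [finValMk]; omega)) ?_ ?_ ?_ ?_ k
    · -- h0 : r u v
      simp only [cStep]
      refine Or.inl ⟨?_, hu1⟩
      rw [mod_succ_eq (by omega), if_neg (by omega)]
    · -- h1
      intro x y
      simp only [cStep, Fin.coe_cast, Fin.ext_iff, finValMk, hsum]
      constructor
      · rintro (⟨hyx, hux⟩ | ⟨hxy, huy⟩)
        · by_cases hxE : x.val = A.sum + t3 + 1
          · rw [hxE] at hux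
            exact absurd hu1 (hF2.mp hux)
          · exact Or.inl ⟨Or.inl ⟨hyx, (hF1 x.val hxE).mp hux⟩, fun hp => hxE hp.1⟩
        · by_cases hyE : y.val = A.sum + t3 + 1
          · refine Or.inr ⟨?_, hyE⟩
            rw [hyE, mod_succ_eq (by omega : A.sum + t3 + 1 < (A ++ [t3 + 3] ++ B).sum),
              if_neg (by omega)] at hxy
            exact hxy
          · refine Or.inl ⟨Or.inr ⟨hxy, fun h => huy ((hF1 y.val hyE).mpr h)⟩, ?_⟩
            rintro ⟨hx1, hy1⟩
            rw [hx1, hy1, mod_succ_eq (by omega : A.sum + t3 + 2 < (A ++ [t3 + 3] ++ B).sum)]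
              at hxy
            split_ifs at hxy <;> omega
      · rintro (⟨(⟨hyx, hux⟩ | ⟨hxy, huy⟩), hnp⟩ | ⟨hxv, hyu⟩)
        · by_cases hxE : x.val = A.sum + t3 + 1
          · exfalso
            apply hnp
            refine ⟨hxE, ?_⟩
            rw [hxE, mod_succ_eq (by omega : A.sum + t3 + 1 < (A ++ [t3 + 3] ++ B).sum),
              if_neg (by omega)] at hyx
            exact hyx
          · exact Or.inl ⟨hyx, (hF1 x.val hxE).mpr hux⟩
        · by_cases hyE : y.val = A.sum + t3 + 1
          · rw [hyE] at huy
            exact absurd hu1 huy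
          · exact Or.inr ⟨hxy, fun h => huy ((hF1 y.val hyE).mp h)⟩
        · refine Or.inr ⟨?_, ?_⟩
          · rw [hxv, hyu, mod_succ_eq (by omega : A.sum + t3 + 1 < (A ++ [t3 + 3] ++ B).sum),
              if_neg (by omega)]
          · rw [hyu]
            exact fun h => (hF2.mp h) hu1
    · -- h2 : ∀ x, r x v → x = u
      intro x hx
      simp only [cStep, Fin.coe_cast, finValMk] at hx
      rcases hx with ⟨h1', _⟩ | ⟨h1', h2''⟩
      · rw [mod_succ_eq x.isLt] at h1'
        apply Fin.ext
        simp only [finValMk]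
        split_ifs at h1' <;> omega
      · exact absurd hu2 h2''
    · -- h3 : ∀ y, r u y → y = v
      intro y hy
      simp only [cStep, Fin.coe_cast, finValMk] at hy
      rcases hy with ⟨h1', _⟩ | ⟨h1', h2''⟩
      · rw [mod_succ_eq (by omega : A.sum + t3 + 1 < (A ++ [t3 + 3] ++ B).sum)] at h1'
        apply Fin.ext
        simp only [finValMk]
        split_ifs at h1' <;> omega
      · rw [mod_succ_eq y.isLt] at h1'
        split_ifs at h1' with hc
        all_goals try exact absurd h1' (by omega)
        exfalso
        have hy0 : y.val = A.sum + t3 := by omega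
        rw [hy0] at h2''
        exact h2'' hu0
  · -- the flipped edge goes down in α: u = s+t3+2, v = s+t3+1
    have hnupm : ∀ e, A.sum ≤ e → e < A.sum + (t3 + 3) → ¬ upEdge (A ++ [t3 + 3] ++ B) e :=
      fun e a b h => hev ((hmid e a b).mp h)
    have hu0 : ¬ upEdge (A ++ [t3 + 3] ++ B) (A.sum + t3) := hnupm _ (by omega) (by omega)
    have hu1 : ¬ upEdge (A ++ [t3 + 3] ++ B) (A.sum + t3 + 1) := hnupm _ (by omega) (by omega)
    have hu2 : ¬ upEdge (A ++ [t3 + 3] ++ B) (A.sum + t3 + 2) := hnupm _ (by omega) (by omega)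
    refine flip_le _ _ ⟨A.sum + t3 + 2, by omega⟩ ⟨A.sum + t3 + 1, by omega⟩
      (Fin.ne_of_val_ne (by simp only [finValMk]; omega)) ?_ ?_ ?_ ?_ k
    · -- h0 : r u v
      simp only [cStep]
      refine Or.inr ⟨?_, hu1⟩
      rw [mod_succ_eq (by omega), if_neg (by omega)]
    · -- h1
      intro x y
      simp only [cStep, Fin.coe_cast, Fin.ext_iff, finValMk, hsum]
      constructor
      · rintro (⟨hyx, hux⟩ | ⟨hxy, hnuy⟩)
        · by_cases hxE : x.val = A.sum + t3 + 1
          · refine Or.inr ⟨hxE, ?_⟩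
            rw [hxE, mod_succ_eq (by omega : A.sum + t3 + 1 < (A ++ [t3 + 3] ++ B).sum),
              if_neg (by omega)] at hyx
            exact hyx
          · refine Or.inl ⟨Or.inl ⟨hyx, (hF1 x.val hxE).mp hux⟩, ?_⟩
            rintro ⟨hx1, hy1⟩
            rw [hx1, hy1, mod_succ_eq (by omega : A.sum + t3 + 2 < (A ++ [t3 + 3] ++ B).sum)]
              at hyx
            split_ifs at hyx <;> omega
        · by_cases hyE : y.val = A.sum + t3 + 1
          · rw [hyE] at hnuy
            exact absurd (hF2.mpr hu1) hnuy
          · refine Or.inl ⟨Or.inr ⟨hxy, fun h => hnuy ((hF1 y.val hyE).mpr h)⟩, ?_⟩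
            rintro ⟨hx1, hy1⟩
            exact hyE hy1
      · rintro (⟨(⟨hyx, hux⟩ | ⟨hxy, hnuy⟩), hnp⟩ | ⟨hxv, hyu⟩)
        · by_cases hxE : x.val = A.sum + t3 + 1
          · exfalso
            rw [hxE] at hux
            exact hu1 hux
          · exact Or.inl ⟨hyx, (hF1 x.val hxE).mpr hux⟩
        · by_cases hyE : y.val = A.sum + t3 + 1
          · exfalso
            apply hnp
            rw [hyE, mod_succ_eq (by omega : A.sum + t3 + 1 < (A ++ [t3 + 3] ++ B).sum),
              if_neg (by omega)] at hxy
            exact ⟨hxy, hyE⟩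
          · exact Or.inr ⟨hxy, fun h => hnuy ((hF1 y.val hyE).mp h)⟩
        · refine Or.inl ⟨?_, ?_⟩
          · rw [hyu, hxv, mod_succ_eq (by omega : A.sum + t3 + 1 < (A ++ [t3 + 3] ++ B).sum),
              if_neg (by omega)]
          · rw [hxv]
            exact hF2.mpr hu1
    · -- h2 : ∀ x, r x v → x = u  (v.val = s+t3+1, u.val = s+t3+2)
      intro x hx
      simp only [cStep, Fin.coe_cast, finValMk] at hx
      rcases hx with ⟨h1', h2''⟩ | ⟨h1', _⟩
      · rw [mod_succ_eq x.isLt] at h1'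
        split_ifs at h1' with hc
        all_goals try exact absurd h1' (by omega)
        exfalso
        have hx0 : x.val = A.sum + t3 := by omega
        rw [hx0] at h2''
        exact hu0 h2''
      · rw [mod_succ_eq (by omega : A.sum + t3 + 1 < (A ++ [t3 + 3] ++ B).sum)] at h1'
        apply Fin.ext
        simp only [finValMk]
        split_ifs at h1' <;> omega
    · -- h3 : ∀ y, r u y → y = v
      intro y hy
      simp only [cStep, Fin.coe_cast, finValMk] at hy
      rcases hy with ⟨h1', h2''⟩ | ⟨h1', _⟩
      · exact absurd h2'' hu2
      · rw [mod_succ_eq y.isLt] at h1'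
        apply Fin.ext
        simp only [finValMk]
        split_ifs at h1' <;> omega
end
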